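/- arXiv:2104.14176 — 13 statements merged into one kernel-verified Lean document; each statement's English description precedes it below -/
import Mathlib

section
/- Let g ∈ (0, 1/4) be real and set x := 1/(2√g). Then for every m ∈ ℕ, the quantity √g·U_{m+1}(x) is nonzero and X_m(g) = U_m(x)/(√g·U_{m+1}(x)), where U_n denotes the n-th Chebyshev polynomial of the second kind (with U_0 = 1, U_1(x) = 2x). -/
/-- The sequence `X_m(g)` defined by `X_0 = 1`, `X_{m+1} = 1/(1 - g X_m)`. -/
noncomputable def Xseq (g : ℝ) : ℕ → ℝ
  | 0 => 1
  | m + 1 => 1 / (1 - g * Xseq g m)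

lemma U_pos_mono (x : ℝ) (hx1 : 1 < x) (n : ℕ) :
    0 < (Polynomial.Chebyshev.U ℝ (n : ℤ)).eval x ∧
    (Polynomial.Chebyshev.U ℝ (n : ℤ)).eval x <
      (Polynomial.Chebyshev.U ℝ (n + 1 : ℤ)).eval x := by
  induction n with
  | zero =>
    simp [Polynomial.Chebyshev.U_zero, Polynomial.Chebyshev.U_one]
    linarith
  | succ n ih =>
    obtain ⟨h0, h1⟩ := ih
    have hrec := Polynomial.Chebyshev.U_add_two ℝ (n : ℤ)
    have heval : (Polynomial.Chebyshev.U ℝ ((n : ℤ) + 2)).eval x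
        = 2 * x * (Polynomial.Chebyshev.U ℝ ((n : ℤ) + 1)).eval x
          - (Polynomial.Chebyshev.U ℝ (n : ℤ)).eval x := by
      rw [hrec]; simp
    have hcast : ((n + 1 : ℕ) : ℤ) = (n : ℤ) + 1 := by push_cast; ring
    rw [hcast, show (n : ℤ) + 1 + 1 = (n : ℤ) + 2 from by ring, heval]
    constructor
    · linarith
    · nlinarith

/-- For `g ∈ (0,1/4)` and `x := 1/(2√g)`, for every `m` the quantity
`√g · U_{m+1}(x)` is nonzero and `X_m(g) = U_m(x)/(√g · U_{m+1}(x))`. -/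
theorem stmt_1 (g : ℝ) (hg0 : 0 < g) (hg1 : g < 1/4) (x : ℝ) (hx : x = 1 / (2 * Real.sqrt g))
    (m : ℕ) :
    Real.sqrt g * (Polynomial.Chebyshev.U ℝ (m + 1 : ℤ)).eval x ≠ 0 ∧
    Xseq g m =
      (Polynomial.Chebyshev.U ℝ (m : ℤ)).eval x
        / (Real.sqrt g * (Polynomial.Chebyshev.U ℝ (m + 1 : ℤ)).eval x) := by
  set s := Real.sqrt g with hs
  have hs0 : 0 < s := Real.sqrt_pos.mpr hg0
  have hs2 : s ^ 2 = g := Real.sq_sqrt hg0.le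
  have hshalf : s < 1/2 := by
    nlinarith [Real.sq_sqrt hg0.le, Real.sqrt_nonneg g]
  have hx1 : 1 < x := by
    rw [hx, lt_div_iff₀ (by positivity)]
    linarith
  have h2x : 2 * x = 1 / s := by
    rw [hx]; field_simp
  have key : ∀ n : ℕ, s * (Polynomial.Chebyshev.U ℝ ((n : ℤ) + 2)).eval x
      = (Polynomial.Chebyshev.U ℝ ((n : ℤ) + 1)).eval x
        - s * (Polynomial.Chebyshev.U ℝ (n : ℤ)).eval x := by
    intro n
    have hrec := Polynomial.Chebyshev.U_add_two ℝ (n : ℤ)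
    have heval : (Polynomial.Chebyshev.U ℝ ((n : ℤ) + 2)).eval x
        = 2 * x * (Polynomial.Chebyshev.U ℝ ((n : ℤ) + 1)).eval x
          - (Polynomial.Chebyshev.U ℝ (n : ℤ)).eval x := by
      rw [hrec]; simp
    rw [heval, h2x]
    field_simp
  induction m with
  | zero =>
    have hU1 : (Polynomial.Chebyshev.U ℝ (((0:ℕ):ℤ) + 1)).eval x = 2 * x := by
      norm_num [Polynomial.Chebyshev.U_one]
    have hU0 : (Polynomial.Chebyshev.U ℝ ((0:ℕ):ℤ)).eval x = 1 := by
      norm_num [Polynomial.Chebyshev.U_zero]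
    have hs1 : s * (2 * x) = 1 := by
      rw [h2x]; field_simp
    rw [hU1, hU0, hs1]
    norm_num [Xseq]
  | succ n ih =>
    obtain ⟨hne, hX⟩ := ih
    have hposn := U_pos_mono x hx1 n
    have hposn1 := U_pos_mono x hx1 (n + 1)
    have hcast : ((n + 1 : ℕ) : ℤ) = (n : ℤ) + 1 := by push_cast; ring
    rw [hcast] at hposn1
    rw [hcast, show (n : ℤ) + 1 + 1 = (n : ℤ) + 2 from by ring]
    set u0 := (Polynomial.Chebyshev.U ℝ (n : ℤ)).eval x with hu0
    set u1 := (Polynomial.Chebyshev.U ℝ ((n : ℤ) + 1)).eval x with hu1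
    set u2 := (Polynomial.Chebyshev.U ℝ ((n : ℤ) + 2)).eval x with hu2
    have hkey : s * u2 = u1 - s * u0 := key n
    have hu0pos : 0 < u0 := hposn.1
    have hu1pos : 0 < u1 := hposn1.1
    have hu2pos : 0 < u2 := by
      rw [hu2, show (n : ℤ) + 2 = (n : ℤ) + 1 + 1 from by ring]
      linarith [hposn1.1, hposn1.2]
    refine ⟨by positivity, ?_⟩
    show 1 / (1 - g * Xseq g n) = u1 / (s * u2)
    rw [hX]
    rw [div_eq_div_iff]
    · field_simp
      linear_combination s * hkey - u0 * hs2
    · have heq : 1 - g * (u0 / (s * u1)) = s * (s * u2) / (s * u1) := by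
        rw [← hs2]
        field_simp
        linear_combination (-1 : ℝ) * hkey
      rw [heq]
      positivity
    · positivity
end

section
/- Let g ∈ (0, 1/4) be real and set x := 1/(2√g). Then for every m ∈ ℕ, W_m(g) = 1/(√g·U_m(x)·U_{m+1}(x)), where U_n denotes the n-th Chebyshev polynomial of the second kind. -/
/-- The fixed-height partition functions `W_0(g) = 1`, `W_m(g) = X_m(g) - X_{m-1}(g)` for `m ≥ 1`. -/
noncomputable def Wseq (g : ℝ) : ℕ → ℝ
  | 0 => 1
  | m + 1 => Xseq g (m + 1) - Xseq g m

section aux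

variable (x : ℝ)

/-- Evaluation of Chebyshev U at x, as a ℕ-indexed sequence. -/
noncomputable def useq (n : ℕ) : ℝ := (Polynomial.Chebyshev.U ℝ (n : ℤ)).eval x

lemma useq_zero : useq x 0 = 1 := by
  simp [useq, Polynomial.Chebyshev.U_zero]

lemma useq_one : useq x 1 = 2 * x := by
  simp [useq, Polynomial.Chebyshev.U_one]

lemma useq_add_two (n : ℕ) : useq x (n + 2) = 2 * x * useq x (n + 1) - useq x n := by
  have h : ((n + 2 : ℕ) : ℤ) = (n : ℤ) + 2 := by push_cast; ring
  have h1 : ((n + 1 : ℕ) : ℤ) = (n : ℤ) + 1 := by push_cast; ring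
  simp only [useq, h, h1, Polynomial.Chebyshev.U_add_two]
  simp [Polynomial.eval_sub, Polynomial.eval_mul]

lemma useq_mono (hx1 : 1 ≤ x) (n : ℕ) : 1 ≤ useq x n ∧ useq x n ≤ useq x (n + 1) := by
  induction n with
  | zero =>
    constructor
    · rw [useq_zero]
    · rw [useq_zero, useq_one]; linarith
  | succ k ih =>
    obtain ⟨h1, h2⟩ := ih
    have hk1 : (1 : ℝ) ≤ useq x (k + 1) := le_trans h1 h2
    constructor
    · exact hk1
    · rw [useq_add_two]
      nlinarith

lemma useq_pos (hx1 : 1 ≤ x) (n : ℕ) : 0 < useq x n :=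
  lt_of_lt_of_le one_pos (useq_mono x hx1 n).1

lemma useq_det (n : ℕ) : useq x (n + 1) ^ 2 - useq x n * useq x (n + 2) = 1 := by
  induction n with
  | zero =>
    rw [useq_add_two, useq_zero, useq_one]; ring
  | succ k ih =>
    rw [useq_add_two x (k + 1)]
    rw [useq_add_two x k] at ih ⊢
    nlinarith [ih]

end aux

/-- For `g ∈ (0,1/4)` and `x := 1/(2√g)`, for every `m`,
`W_m(g) = 1/(√g · U_m(x) · U_{m+1}(x))`. -/
theorem stmt_2 (g : ℝ) (hg0 : 0 < g) (hg1 : g < 1/4) (x : ℝ) (hx : x = 1 / (2 * Real.sqrt g))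
    (m : ℕ) :
    Wseq g m =
      1 / (Real.sqrt g * (Polynomial.Chebyshev.U ℝ (m : ℤ)).eval x
            * (Polynomial.Chebyshev.U ℝ (m + 1 : ℤ)).eval x) := by
  set s := Real.sqrt g with hs
  have hs0 : 0 < s := Real.sqrt_pos.mpr hg0
  have hs2 : s ^ 2 = g := Real.sq_sqrt hg0.le
  have hshalf : s < 1 / 2 := by nlinarith [hs2]
  have hx1 : 1 < x := by
    rw [hx]
    rw [lt_div_iff₀ (by positivity)]
    linarith
  have h2sx : 2 * s * x = 1 := by
    rw [hx]; field_simp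
  have hpos := useq_pos x hx1.le
  -- X m = u m / (s * u (m+1))
  have hX : ∀ n : ℕ, Xseq g n = useq x n / (s * useq x (n + 1)) := by
    intro n
    induction n with
    | zero =>
      rw [show Xseq g 0 = 1 from rfl, useq_zero, useq_one]
      field_simp
      linarith [h2sx]
    | succ k ih =>
      rw [show Xseq g (k + 1) = 1 / (1 - g * Xseq g k) from rfl, ih]
      have hu1 := hpos (k + 1)
      have hu0 := hpos k
      have hu2 := hpos (k + 2)
      have hrec : useq x (k + 2) = 2 * x * useq x (k + 1) - useq x k := useq_add_two x k
      have hden : 1 - g * (useq x k / (s * useq x (k + 1))) =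
          s * useq x (k + 2) / useq x (k + 1) := by
        rw [hrec]
        field_simp
        linear_combination useq x k * hs2 - s * useq x (k + 1) * h2sx
      rw [hden, one_div_div]
  -- now finish
  have hcast : ∀ n : ℕ, (Polynomial.Chebyshev.U ℝ (n : ℤ)).eval x = useq x n := fun n => rfl
  cases m with
  | zero =>
    show (1 : ℝ) = _
    norm_num [Polynomial.Chebyshev.U_zero, Polynomial.Chebyshev.U_one]
    field_simp
    linarith [h2sx]
  | succ k =>
    show Xseq g (k + 1) - Xseq g k = _
    have hc1 : ((k + 1 : ℕ) : ℤ) = (k : ℤ) + 1 := by push_cast; ring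
    have hc2 : ((k + 2 : ℕ) : ℤ) = ((k : ℤ) + 1) + 1 := by push_cast; ring
    rw [show ((k + 1 : ℕ):ℤ) + 1 = ((k + 2 : ℕ) : ℤ) by push_cast; ring]
    rw [hcast (k + 1), hcast (k + 2)]
    rw [hX (k + 1), hX k]
    have hu0 := hpos k
    have hu1 := hpos (k + 1)
    have hu2 := hpos (k + 2)
    have hdet := useq_det x k
    have he : useq x (k + 1 + 1) = useq x (k + 2) := by norm_num
    rw [he]
    have key : useq x (k + 1) / (s * useq x (k + 2)) - useq x k / (s * useq x (k + 1)) =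
        (useq x (k + 1) ^ 2 - useq x k * useq x (k + 2)) /
          (s * useq x (k + 1) * useq x (k + 2)) := by
      field_simp
    rw [key, hdet]
end

section
/- Let m ≥ 1 be an integer and set g_m := 1/(4·cos²(π/(m+2))). Then for every real g ∈ (0, g_m), the recursion defining X is well defined up to index m, i.e. X_k(g) > 0 and 1 − g·X_k(g) > 0 for all k < m; moreover X_m(g) tends to +∞ as g tends to g_m from the left. -/
/-- The linearizing sequence: `b_0 = b_1 = 1`, `b_{k+2} = b_{k+1} - g b_k`,
so that `X_k = b_k / b_{k+1}`. -/
noncomputable def bseq (g : ℝ) : ℕ → ℝ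
  | 0 => 1
  | 1 => 1
  | (k+2) => bseq g (k+1) - g * bseq g k

lemma bseq_cont (n : ℕ) : Continuous fun g => bseq g n := by
  induction n using Nat.strong_induction_on with
  | _ n ih =>
    match n with
    | 0 => simpa [bseq] using continuous_const
    | 1 => simpa [bseq] using continuous_const
    | (k+2) =>
      have h1 := ih (k+1) (by omega)
      have h0 := ih k (by omega)
      show Continuous fun g => bseq g (k+1) - g * bseq g k
      exact h1.sub (continuous_id.mul h0)

lemma bseq_formula (θ : ℝ) (hc : Real.cos θ ≠ 0) (n : ℕ) :
    (2*Real.cos θ)^n * Real.sin θ * bseq (1/(4*Real.cos θ^2)) n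
      = Real.sin ((n+1)*θ) := by
  induction n using Nat.strong_induction_on with
  | _ n ih =>
    match n with
    | 0 => simp [bseq]
    | 1 =>
      simp only [bseq, pow_one, mul_one]
      rw [show ((1:ℕ)+1 : ℝ)*θ = 2*θ by push_cast; ring, Real.sin_two_mul]
      ring
    | (k+2) =>
      have h1 := ih (k+1) (by omega)
      have h0 := ih k (by omega)
      have key : Real.sin (((k:ℝ)+2+1)*θ)
          = 2*Real.cos θ * Real.sin (((k:ℝ)+1+1)*θ) - Real.sin (((k:ℝ)+1)*θ) := by
        have e1 : ((k:ℝ)+2+1)*θ = ((k:ℝ)+1+1)*θ + θ := by ring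
        have e2 : ((k:ℝ)+1)*θ = ((k:ℝ)+1+1)*θ - θ := by ring
        rw [e1, e2, Real.sin_add, Real.sin_sub]; ring
      push_cast at h1 h0 ⊢
      rw [show bseq (1/(4*Real.cos θ^2)) (k+2)
          = bseq (1/(4*Real.cos θ^2)) (k+1) - (1/(4*Real.cos θ^2)) * bseq (1/(4*Real.cos θ^2)) k
          from rfl, key, ← h1, ← h0]
      field_simp
      ring

lemma Xseq_eq_bseq (g : ℝ) (k : ℕ) (h : ∀ j, j ≤ k → bseq g (j+1) ≠ 0) :
    Xseq g k = bseq g k / bseq g (k+1) := by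
  induction k with
  | zero => simp [Xseq, bseq]
  | succ k ih =>
    have hk1 : bseq g (k+1) ≠ 0 := h k (by omega)
    rw [Xseq, ih (fun j hj => h j (by omega))]
    have h2 : 1 - g * (bseq g k / bseq g (k+1)) = bseq g (k+2) / bseq g (k+1) := by
      rw [show bseq g (k+2) = bseq g (k+1) - g * bseq g k from rfl]
      field_simp
    rw [h2, one_div_div]

lemma bseq_pos_of (θ : ℝ) (h0 : 0 < θ) (hπ2 : θ < Real.pi/2) (k : ℕ)
    (hk : ((k:ℝ)+1)*θ < Real.pi) : 0 < bseq (1/(4*Real.cos θ^2)) k := by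
  have hc : 0 < Real.cos θ :=
    Real.cos_pos_of_mem_Ioo ⟨by linarith [Real.pi_pos], hπ2⟩
  have hs : 0 < Real.sin θ :=
    Real.sin_pos_of_pos_of_lt_pi h0 (by linarith [Real.pi_pos])
  have hsk : 0 < Real.sin (((k:ℝ)+1)*θ) :=
    Real.sin_pos_of_pos_of_lt_pi (by positivity) hk
  have hf := bseq_formula θ hc.ne' k
  have hA : 0 < (2*Real.cos θ)^k * Real.sin θ :=
    mul_pos (pow_pos (by linarith) k) hs
  nlinarith [hf, hA, hsk]

lemma exists_theta (m : ℕ) (g : ℝ) (h1 : 1/4 < g)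
    (h2 : g < 1 / (4 * Real.cos (Real.pi / (m + 2)) ^ 2))
    (hcm : 0 < Real.cos (Real.pi / (m + 2))) :
    ∃ θ : ℝ, 0 < θ ∧ θ < Real.pi / (m + 2) ∧ g = 1/(4*Real.cos θ^2) := by
  set tm := Real.pi / (m + 2) with htm
  have hg0 : (0:ℝ) < g := by linarith
  have hsq : (1:ℝ)/2 < Real.sqrt g := by
    have h := Real.sqrt_lt_sqrt (by norm_num : (0:ℝ) ≤ 1/4) h1
    rwa [show (1:ℝ)/4 = (1/2)^2 by norm_num, Real.sqrt_sq (by norm_num : (0:ℝ) ≤ 1/2)] at h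
  have hsq0 : 0 < Real.sqrt g := by linarith
  set x := 1/(2*Real.sqrt g) with hx
  have hx0 : 0 < x := by positivity
  have hx1 : x < 1 := by
    rw [hx, div_lt_one (by linarith)]; linarith
  have hkey : Real.cos tm < x := by
    have h4 : 4 * g * Real.cos tm ^ 2 < 1 := by
      have hd : 0 < 4 * Real.cos tm ^ 2 := by positivity
      rw [lt_div_iff₀ hd] at h2; linarith
    have hs2 : Real.sqrt g ^ 2 = g := Real.sq_sqrt hg0.le
    rw [hx, lt_div_iff₀ (by linarith)]
    nlinarith [hsq0, hcm]
  refine ⟨Real.arccos x, Real.arccos_pos.mpr hx1, ?_, ?_⟩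
  · by_contra h
    push_neg at h
    have := Real.cos_le_cos_of_nonneg_of_le_pi (by positivity : (0:ℝ) ≤ tm)
      (Real.arccos_le_pi x) h
    rw [Real.cos_arccos (by linarith) hx1.le] at this
    linarith
  · have hca : Real.cos (Real.arccos x) = x := Real.cos_arccos (by linarith) hx1.le
    rw [hca, hx]
    have hs2 : Real.sqrt g ^ 2 = g := Real.sq_sqrt hg0.le
    field_simp
    linarith [hs2]

lemma easy_bound (g : ℝ) (hg0 : 0 < g) (hg : g ≤ 1/4) (k : ℕ) :
    0 < Xseq g k ∧ Xseq g k ≤ 2 := by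
  induction k with
  | zero => norm_num [Xseq]
  | succ k ih =>
    obtain ⟨h1, h2⟩ := ih
    have hd : 1/2 ≤ 1 - g * Xseq g k := by nlinarith
    refine ⟨by rw [Xseq]; positivity, ?_⟩
    rw [Xseq, div_le_iff₀ (by linarith)]
    linarith

/-- Well-definedness in the supercritical regime `g = 1/(4cos²θ)`, `(m+2)θ < π`. -/
lemma wd (θ : ℝ) (h0 : 0 < θ) (hπ2 : θ < Real.pi/2) (m : ℕ)
    (hθ : ((m:ℝ)+2)*θ < Real.pi) :
    (∀ j : ℕ, j ≤ m+1 → 0 < bseq (1/(4*Real.cos θ^2)) j) ∧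
    ∀ k : ℕ, k < m → 0 < Xseq (1/(4*Real.cos θ^2)) k ∧
      0 < 1 - (1/(4*Real.cos θ^2)) * Xseq (1/(4*Real.cos θ^2)) k := by
  set g := 1/(4*Real.cos θ^2) with hgdef
  have hb : ∀ j : ℕ, j ≤ m+1 → 0 < bseq g j := by
    intro j hj
    apply bseq_pos_of θ h0 hπ2
    have hc : ((j:ℝ)+1) ≤ (m:ℝ)+2 := by exact_mod_cast Nat.succ_le_succ (by omega)
    nlinarith
  refine ⟨hb, fun k hk => ?_⟩
  have hX : Xseq g k = bseq g k / bseq g (k+1) :=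
    Xseq_eq_bseq g k (fun j hj => (hb (j+1) (by omega)).ne')
  have h1 : 0 < Xseq g k := by
    rw [hX]; exact div_pos (hb k (by omega)) (hb (k+1) (by omega))
  refine ⟨h1, ?_⟩
  have hk1 : bseq g (k+1) ≠ 0 := (hb (k+1) (by omega)).ne'
  have h2 : 1 - g * Xseq g k = bseq g (k+2) / bseq g (k+1) := by
    rw [hX, show bseq g (k+2) = bseq g (k+1) - g * bseq g k from rfl]
    field_simp
  rw [h2]
  exact div_pos (hb (k+2) (by omega)) (hb (k+1) (by omega))

/-- For `m ≥ 1` and `g_m := 1/(4 cos²(π/(m+2)))`, the recursion defining `X`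
is well defined up to index `m` on `(0, g_m)`, and `X_m(g) → +∞` as `g → g_m` from the left. -/
theorem stmt_4 (m : ℕ) (hm : 1 ≤ m) (gm : ℝ)
    (hgm : gm = 1 / (4 * Real.cos (Real.pi / (m + 2)) ^ 2)) :
    (∀ g : ℝ, 0 < g → g < gm → ∀ k : ℕ, k < m → 0 < Xseq g k ∧ 0 < 1 - g * Xseq g k) ∧
    Filter.Tendsto (fun g : ℝ => Xseq g m) (nhdsWithin gm (Set.Iio gm)) Filter.atTop := by
  have hpi := Real.pi_pos
  set tm := Real.pi / ((m:ℝ) + 2) with htm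
  have hm2 : (3:ℝ) ≤ (m:ℝ) + 2 := by
    have : (1:ℝ) ≤ (m:ℝ) := by exact_mod_cast hm
    linarith
  have htm0 : 0 < tm := by positivity
  have htm2 : tm < Real.pi/2 := by
    rw [htm, div_lt_div_iff₀ (by linarith) (by norm_num)]
    nlinarith
  have hcm : 0 < Real.cos tm :=
    Real.cos_pos_of_mem_Ioo ⟨by linarith, htm2⟩
  have hsm : 0 < Real.sin tm :=
    Real.sin_pos_of_pos_of_lt_pi htm0 (by linarith)
  have hcm1 : Real.cos tm ^ 2 < 1 := by
    nlinarith [Real.sin_sq_add_cos_sq tm]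
  have hgm4 : 1/4 < gm := by
    rw [hgm]
    rw [div_lt_div_iff₀ (by norm_num) (by positivity)]
    nlinarith
  -- (m+2) * tm = π
  have hmtm : ((m:ℝ)+2) * tm = Real.pi := by
    rw [htm]; field_simp
  -- part 1
  have part1 : ∀ g : ℝ, 0 < g → g < gm → ∀ k : ℕ, k < m →
      0 < Xseq g k ∧ 0 < 1 - g * Xseq g k := by
    intro g hg0 hglt k hk
    by_cases hle : g ≤ 1/4
    · obtain ⟨h1, h2⟩ := easy_bound g hg0 hle k
      exact ⟨h1, by nlinarith⟩
    · push_neg at hle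
      obtain ⟨θ, hθ0, hθlt, hθeq⟩ := exists_theta m g hle (hgm ▸ hglt) hcm
      have hθπ2 : θ < Real.pi/2 := by linarith
      have hθπ : ((m:ℝ)+2)*θ < Real.pi := by
        calc ((m:ℝ)+2)*θ < ((m:ℝ)+2)*tm := by
              apply mul_lt_mul_of_pos_left hθlt (by linarith)
          _ = Real.pi := hmtm
      rw [hθeq]
      exact (wd θ hθ0 hθπ2 m hθπ).2 k hk
  refine ⟨part1, ?_⟩
  -- tendsto part
  -- endpoint values
  have hbm_end : 0 < bseq gm m := by
    rw [hgm]
    apply bseq_pos_of tm htm0 htm2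
    calc ((m:ℝ)+1)*tm < ((m:ℝ)+2)*tm := by
          apply mul_lt_mul_of_pos_right (by linarith) htm0
      _ = Real.pi := hmtm
  have hbm1_end : bseq gm (m+1) = 0 := by
    have hf := bseq_formula tm hcm.ne' (m+1)
    rw [← hgm] at hf
    have hcast : ((((m+1:ℕ)):ℝ)+1) * tm = ((m:ℝ)+2)*tm := by push_cast; ring
    rw [hcast, hmtm, Real.sin_pi] at hf
    have hA : 0 < (2*Real.cos tm)^(m+1) * Real.sin tm :=
      mul_pos (pow_pos (by linarith) _) hsm
    nlinarith [hf, hA, sq_nonneg (bseq gm (m+1))]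
  -- eventual identity and positivity on (1/4, gm)
  have hev : ∀ g ∈ Set.Ioo (1/4:ℝ) gm,
      Xseq g m = bseq g m / bseq g (m+1) ∧ 0 < bseq g (m+1) := by
    intro g hg
    obtain ⟨θ, hθ0, hθlt, hθeq⟩ := exists_theta m g hg.1 (hgm ▸ hg.2) hcm
    have hθπ2 : θ < Real.pi/2 := by linarith
    have hθπ : ((m:ℝ)+2)*θ < Real.pi := by
      calc ((m:ℝ)+2)*θ < ((m:ℝ)+2)*tm :=
            mul_lt_mul_of_pos_left hθlt (by linarith)
        _ = Real.pi := hmtm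
    have hb := (wd θ hθ0 hθπ2 m hθπ).1
    rw [hθeq]
    exact ⟨Xseq_eq_bseq _ m (fun j hj => (hb (j+1) (by omega)).ne'),
      hb (m+1) le_rfl⟩
  have hmem : Set.Ioo (1/4:ℝ) gm ∈ nhdsWithin gm (Set.Iio gm) := by
    rw [show Set.Ioo (1/4:ℝ) gm = Set.Ioi (1/4) ∩ Set.Iio gm from
      (Set.Ioi_inter_Iio).symm]
    exact Filter.inter_mem
      (mem_nhdsWithin_of_mem_nhds (isOpen_Ioi.mem_nhds hgm4))
      self_mem_nhdsWithin
  have hd_tendsto : Filter.Tendsto (fun g => bseq g (m+1))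
      (nhdsWithin gm (Set.Iio gm)) (nhdsWithin 0 (Set.Ioi 0)) := by
    rw [tendsto_nhdsWithin_iff]
    constructor
    · have := ((bseq_cont (m+1)).tendsto gm).mono_left
        (nhdsWithin_le_nhds (s := Set.Iio gm))
      rwa [hbm1_end] at this
    · filter_upwards [hmem] with g hg
      exact (hev g hg).2
  have hc_tendsto : Filter.Tendsto (fun g => bseq g m)
      (nhdsWithin gm (Set.Iio gm)) (nhds (bseq gm m)) :=
    ((bseq_cont m).tendsto gm).mono_left nhdsWithin_le_nhds
  have hmain : Filter.Tendsto (fun g => bseq g m * (bseq g (m+1))⁻¹)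
      (nhdsWithin gm (Set.Iio gm)) Filter.atTop :=
    Filter.Tendsto.pos_mul_atTop hbm_end hc_tendsto
      (tendsto_inv_nhdsGT_zero.comp hd_tendsto)
  apply hmain.congr'
  filter_upwards [hmem] with g hg
  rw [(hev g hg).1, div_eq_mul_inv]
end

section
/- For every real g ∈ (0, 1/4) and every integer m ≥ 1, W_m(g) = g^m·W(g)^{2m−2}·X_m(g)·∏_{i=1}^{m−1} (X_i(g)/W(g))². -/
/-- The tree partition function `W(g) = (1 - √(1-4g))/(2g)`. -/
noncomputable def Wfun (g : ℝ) : ℝ := (1 - Real.sqrt (1 - 4 * g)) / (2 * g)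

lemma Xseq_bound (g : ℝ) (hg0 : 0 < g) (hg1 : g < 1/4) (m : ℕ) :
    1 ≤ Xseq g m ∧ Xseq g m < 2 := by
  induction m with
  | zero => simp [Xseq]
  | succ k ih =>
    have h1 : g * Xseq g k < 1/2 := by nlinarith [ih.1, ih.2]
    have h2 : 0 < g * Xseq g k := by nlinarith [ih.1]
    have hd : (0:ℝ) < 1 - g * Xseq g k := by linarith
    constructor
    · rw [Xseq, le_div_iff₀ hd]; linarith
    · rw [Xseq, div_lt_iff₀ hd]; linarith

lemma denom_pos (g : ℝ) (hg0 : 0 < g) (hg1 : g < 1/4) (m : ℕ) :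
    0 < 1 - g * Xseq g m := by
  obtain ⟨h1, h2⟩ := Xseq_bound g hg0 hg1 m
  nlinarith

lemma Wfun_pos (g : ℝ) (hg0 : 0 < g) (hg1 : g < 1/4) : 0 < Wfun g := by
  have h0 : (0:ℝ) ≤ 1 - 4 * g := by linarith
  have h1 : Real.sqrt (1 - 4 * g) < 1 := by
    calc Real.sqrt (1 - 4 * g) < Real.sqrt 1 := Real.sqrt_lt_sqrt h0 (by linarith)
    _ = 1 := Real.sqrt_one
  exact div_pos (by linarith) (by linarith)

lemma Wseq_rec (g : ℝ) (hg0 : 0 < g) (hg1 : g < 1/4) (k : ℕ) :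
    Wseq g (k + 2) = g * Xseq g (k + 2) * Xseq g (k + 1) * Wseq g (k + 1) := by
  have d1 := (denom_pos g hg0 hg1 k).ne'
  have d2 := (denom_pos g hg0 hg1 (k + 1)).ne'
  have hb : Xseq g (k+1) * (1 - g * Xseq g k) = 1 := by
    rw [show Xseq g (k+1) = 1 / (1 - g * Xseq g k) from rfl]
    field_simp
  show Xseq g (k+2) - Xseq g (k+1) = _
  rw [show Wseq g (k+1) = Xseq g (k+1) - Xseq g k from rfl,
    show Xseq g (k+2) = 1 / (1 - g * Xseq g (k+1)) from rfl]
  field_simp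
  linear_combination (-1 : ℝ) * hb

lemma key (g : ℝ) (hg0 : 0 < g) (hg1 : g < 1/4) (k : ℕ) :
    Wseq g (k + 1) =
      g ^ (k + 1) * Wfun g ^ (2 * k) * Xseq g (k + 1) *
        ∏ i ∈ Finset.Icc 1 k, (Xseq g i / Wfun g) ^ 2 := by
  induction k with
  | zero =>
    have d0 := (denom_pos g hg0 hg1 0).ne'
    simp only [Finset.Icc_self, mul_zero, pow_zero, Finset.Icc_eq_empty_of_lt,
      Nat.lt_irrefl]
    show Xseq g 1 - Xseq g 0 = g ^ 1 * 1 * Xseq g 1 * ∏ i ∈ Finset.Icc 1 0, (Xseq g i / Wfun g) ^ 2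
    rw [show Finset.Icc 1 0 = (∅ : Finset ℕ) by simp]
    simp only [Finset.prod_empty, mul_one, pow_one]
    rw [show Xseq g 1 = 1 / (1 - g * Xseq g 0) from rfl, show Xseq g 0 = 1 from rfl] at *
    have h : (1:ℝ) - g ≠ 0 := by nlinarith [denom_pos g hg0 hg1 0]
    field_simp
    ring
  | succ k ih =>
    have hW := (Wfun_pos g hg0 hg1).ne'
    rw [Wseq_rec g hg0 hg1 k, ih,
      Finset.prod_Icc_succ_top (Nat.one_le_iff_ne_zero.mpr (Nat.succ_ne_zero k))]
    field_simp
    ring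

/-- For `g ∈ (0,1/4)` and `m ≥ 1`,
`W_m(g) = g^m · W(g)^{2m-2} · X_m(g) · ∏_{i=1}^{m-1} (X_i(g)/W(g))²`. -/
theorem stmt_5 (g : ℝ) (hg0 : 0 < g) (hg1 : g < 1/4) (m : ℕ) (hm : 1 ≤ m) :
    Wseq g m =
      g ^ m * Wfun g ^ (2 * m - 2) * Xseq g m *
        ∏ i ∈ Finset.Icc 1 (m - 1), (Xseq g i / Wfun g) ^ 2 := by
  obtain ⟨k, rfl⟩ := Nat.exists_eq_add_of_le hm
  rw [show 1 + k = k + 1 by ring, show 2 * (k + 1) - 2 = 2 * k by omega,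
    show k + 1 - 1 = k from rfl]
  exact key g hg0 hg1 k
end

section
/- For every real k > 0 and every real g ∈ (0, 1/4), the following inequalities hold in the extended nonnegative reals [0, ∞]: (φ(W(g)−1)²/W(g)) · ∑_{m=0}^∞ (k·(W(g)−1))^m ≤ ∑_{m=0}^∞ k^m·W_m(g) ≤ ∑_{m=0}^∞ (k·(W(g)−1))^m, where all three series have nonnegative terms and are interpreted as sums in [0, ∞]. -/
/-- Euler's function `φ(q) = ∏_{i=1}^∞ (1 - q^i)`. -/
noncomputable def eulerPhi (q : ℝ) : ℝ := ∏' i : ℕ, (1 - q ^ (i + 1))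

lemma aux_pos (q : ℝ) (hq0 : 0 < q) (hq1 : q < 1) (n : ℕ) (hn : n ≠ 0) : 0 < 1 - q ^ n := by
  have := pow_lt_one₀ hq0.le hq1 hn
  linarith

lemma Xseq_closed (g q : ℝ) (hq0 : 0 < q) (hq1 : q < 1) (hg : g = q / (1+q)^2) (m : ℕ) :
    Xseq g m = (1+q) * (1 - q^(m+1)) / (1 - q^(m+2)) := by
  have hq1' : (0:ℝ) < 1 + q := by linarith
  induction m with
  | zero =>
    have h2 := aux_pos q hq0 hq1 2 (by norm_num)
    rw [Xseq]
    field_simp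
    ring
  | succ m ih =>
    have h1 := aux_pos q hq0 hq1 (m+1) (by omega)
    have h2 := aux_pos q hq0 hq1 (m+2) (by omega)
    have h3 := aux_pos q hq0 hq1 (m+3) (by omega)
    rw [Xseq, ih]
    have key : 1 - g * ((1+q) * (1 - q^(m+1)) / (1 - q^(m+2)))
        = (1 - q^(m+3)) / ((1+q) * (1 - q^(m+2))) := by
      rw [hg]
      field_simp
      ring
    rw [key, one_div_div]

lemma Wseq_closed (g q : ℝ) (hq0 : 0 < q) (hq1 : q < 1) (hg : g = q / (1+q)^2) (m : ℕ) :
    Wseq g m = (1+q) * (1-q)^2 * q^m / ((1 - q^(m+1)) * (1 - q^(m+2))) := by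
  have hq1' : (0:ℝ) < 1 + q := by linarith
  cases m with
  | zero =>
    have h1 := aux_pos q hq0 hq1 1 (by norm_num)
    have h2 := aux_pos q hq0 hq1 2 (by norm_num)
    rw [Wseq, eq_div_iff (mul_pos h1 h2).ne']
    ring
  | succ m =>
    have h1 := aux_pos q hq0 hq1 (m+1) (by omega)
    have h2 := aux_pos q hq0 hq1 (m+2) (by omega)
    have h3 := aux_pos q hq0 hq1 (m+3) (by omega)
    rw [Wseq, Xseq_closed g q hq0 hq1 hg, Xseq_closed g q hq0 hq1 hg]
    field_simp
    ring

lemma Wseq_le (g q : ℝ) (hq0 : 0 < q) (hq1 : q < 1) (hg : g = q / (1+q)^2) (m : ℕ) :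
    Wseq g m ≤ q ^ m := by
  have h1 := aux_pos q hq0 hq1 (m+1) (by omega)
  have h2 := aux_pos q hq0 hq1 (m+2) (by omega)
  have hm : (0:ℝ) ≤ q ^ m := by positivity
  rw [Wseq_closed g q hq0 hq1 hg, div_le_iff₀ (mul_pos h1 h2)]
  have ha : q^(m+1) ≤ q^1 := pow_le_pow_of_le_one hq0.le hq1.le (by omega)
  have hb : q^(m+2) ≤ q^2 := pow_le_pow_of_le_one hq0.le hq1.le (by omega)
  have hq2 := aux_pos q hq0 hq1 2 (by norm_num)
  have hq1'' := aux_pos q hq0 hq1 1 (by norm_num)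
  have hkey : (1 - q^1) * (1 - q^2) ≤ (1 - q^(m+1)) * (1 - q^(m+2)) := by
    apply mul_le_mul (by linarith) (by linarith) (by linarith) (by linarith)
  calc (1+q) * (1-q)^2 * q^m = ((1 - q^1) * (1 - q^2)) * q^m := by ring
    _ ≤ ((1 - q^(m+1)) * (1 - q^(m+2))) * q^m := mul_le_mul_of_nonneg_right hkey hm
    _ = q^m * ((1 - q^(m+1)) * (1 - q^(m+2))) := by ring

lemma Wseq_ge (g q : ℝ) (hq0 : 0 < q) (hq1 : q < 1) (hg : g = q / (1+q)^2) (m : ℕ) :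
    (1+q) * (1-q)^2 * q^m ≤ Wseq g m := by
  have h1 := aux_pos q hq0 hq1 (m+1) (by omega)
  have h2 := aux_pos q hq0 hq1 (m+2) (by omega)
  have hm : (0:ℝ) ≤ q ^ m := by positivity
  have hnum : (0:ℝ) ≤ (1+q) * (1-q)^2 * q^m := mul_nonneg (mul_nonneg (by linarith) (sq_nonneg _)) hm
  rw [Wseq_closed g q hq0 hq1 hg, le_div_iff₀ (mul_pos h1 h2)]
  have hp1 : (0:ℝ) < q^(m+1) := by positivity
  have hp2 : (0:ℝ) < q^(m+2) := by positivity
  have hD : (1 - q^(m+1)) * (1 - q^(m+2)) ≤ 1 := by nlinarith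
  nlinarith

lemma multipliable_euler (q : ℝ) (hq0 : 0 < q) (hq1 : q < 1) :
    Multipliable fun i : ℕ => (1 : ℝ) - q ^ (i + 1) := by
  have hsum : Summable fun n : ℕ => Real.log (1 - q ^ (n+1)) := by
    rw [← summable_neg_iff]
    apply Summable.of_nonneg_of_le (f := fun n => (1-q)⁻¹ * q ^ (n+1))
    · intro n
      have h1 : q ^ (n+1) < 1 := pow_lt_one₀ hq0.le hq1 (Nat.succ_ne_zero n)
      have hx : (0:ℝ) < q ^ (n+1) := by positivity
      simp only [neg_nonneg]
      exact Real.log_nonpos (by linarith) (by linarith)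
    · intro n
      have hx : 0 < q ^ (n+1) := by positivity
      have h1 : q ^ (n+1) < 1 := pow_lt_one₀ hq0.le hq1 (Nat.succ_ne_zero n)
      have hpos : 0 < 1 - q ^ (n+1) := by linarith
      have := Real.log_le_sub_one_of_pos (show (0:ℝ) < (1 - q^(n+1))⁻¹ by positivity)
      rw [Real.log_inv] at this
      have hb : (1 - q^(n+1))⁻¹ - 1 = q^(n+1) / (1 - q^(n+1)) := by field_simp; ring
      rw [hb] at this
      refine this.trans ?_
      rw [div_eq_inv_mul]
      apply mul_le_mul_of_nonneg_right _ hx.le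
      apply inv_anti₀ (by linarith)
      nlinarith [pow_le_pow_of_le_one hq0.le hq1.le (show 1 ≤ n+1 by omega), pow_one q]
    · apply Summable.mul_left
      exact (summable_nat_add_iff 1).mpr (summable_geometric_of_lt_one hq0.le hq1)
  exact Real.multipliable_of_summable_log
    (fun n => aux_pos q hq0 hq1 (n+1) (Nat.succ_ne_zero n)) hsum

lemma eulerPhi_nonneg (q : ℝ) (hq0 : 0 < q) (hq1 : q < 1) : 0 ≤ eulerPhi q := by
  have hp := (multipliable_euler q hq0 hq1).hasProd
  exact ge_of_tendsto' hp fun s => Finset.prod_nonneg fun i _ =>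
    (aux_pos q hq0 hq1 (i+1) (Nat.succ_ne_zero i)).le

lemma eulerPhi_le (q : ℝ) (hq0 : 0 < q) (hq1 : q < 1) : eulerPhi q ≤ 1 - q := by
  have hp := (multipliable_euler q hq0 hq1).hasProd
  apply le_of_tendsto hp
  filter_upwards [Filter.eventually_ge_atTop ({0} : Finset ℕ)] with s hs
  have h0 : (0 : ℕ) ∈ s := hs (Finset.mem_singleton_self 0)
  rw [← Finset.mul_prod_erase s _ h0]
  have hle : (∏ i ∈ s.erase 0, (1 - q ^ (i+1))) ≤ 1 := by
    apply Finset.prod_le_one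
    · intro i _
      exact (aux_pos q hq0 hq1 (i+1) (Nat.succ_ne_zero i)).le
    · intro i _
      have : (0:ℝ) < q ^ (i+1) := by positivity
      linarith
  have h01 : (1 : ℝ) - q ^ (0+1) = 1 - q := by norm_num
  rw [h01]
  calc (1 - q) * ∏ i ∈ s.erase 0, (1 - q ^ (i+1))
      ≤ (1 - q) * 1 := by
        apply mul_le_mul_of_nonneg_left hle (by linarith)
    _ = 1 - q := by ring

lemma Wfun_facts (g : ℝ) (hg0 : 0 < g) (hg1 : g < 1/4) :
    1 < Wfun g ∧ Wfun g < 2 ∧ g * (Wfun g)^2 = Wfun g - 1 := by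
  set s := Real.sqrt (1 - 4 * g) with hs
  have h4g : (0:ℝ) < 1 - 4 * g := by linarith
  have hs0 : 0 < s := Real.sqrt_pos.mpr h4g
  have hs2 : s ^ 2 = 1 - 4 * g := Real.sq_sqrt h4g.le
  have hs1 : s < 1 := by nlinarith
  have hw : Wfun g = 2 / (1 + s) := by
    rw [Wfun, div_eq_div_iff (by linarith) (by linarith)]
    nlinarith
  rw [hw]
  refine ⟨?_, ?_, ?_⟩
  · rw [lt_div_iff₀ (by linarith)]; linarith
  · rw [div_lt_iff₀ (by linarith)]; linarith
  · field_simp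
    nlinarith

/-- For `k > 0` and `g ∈ (0,1/4)`, in `[0,∞]`:
`(φ(W-1)²/W) ∑ (k(W-1))^m ≤ ∑ k^m W_m ≤ ∑ (k(W-1))^m`. -/
theorem stmt_7 (k : ℝ) (hk : 0 < k) (g : ℝ) (hg0 : 0 < g) (hg1 : g < 1/4) :
    ENNReal.ofReal (eulerPhi (Wfun g - 1) ^ 2 / Wfun g) *
        (∑' m : ℕ, ENNReal.ofReal ((k * (Wfun g - 1)) ^ m))
      ≤ ∑' m : ℕ, ENNReal.ofReal (k ^ m * Wseq g m) ∧
    (∑' m : ℕ, ENNReal.ofReal (k ^ m * Wseq g m))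
      ≤ ∑' m : ℕ, ENNReal.ofReal ((k * (Wfun g - 1)) ^ m) := by
  obtain ⟨hw1, hw2, hweq⟩ := Wfun_facts g hg0 hg1
  set q := Wfun g - 1 with hqdef
  have hq0 : 0 < q := by simp [hqdef]; linarith
  have hq1 : q < 1 := by simp [hqdef]; linarith
  have hwq : Wfun g = 1 + q := by simp [hqdef]
  have hq1' : (0:ℝ) < 1 + q := by linarith
  have hg : g = q / (1+q)^2 := by
    rw [eq_div_iff (by positivity)]
    rw [hwq] at hweq
    linarith [hweq]
  constructor
  · -- lower bound
    have hφ0 := eulerPhi_nonneg q hq0 hq1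
    have hφle := eulerPhi_le q hq0 hq1
    have hc0 : 0 ≤ eulerPhi q ^ 2 / Wfun g := by
      rw [hwq]; positivity
    rw [← ENNReal.tsum_mul_left]
    apply ENNReal.tsum_le_tsum
    intro m
    rw [← ENNReal.ofReal_mul hc0]
    apply ENNReal.ofReal_le_ofReal
    have hkq : (k * q) ^ m = k ^ m * q ^ m := mul_pow k q m
    have hkm : (0:ℝ) ≤ k ^ m := by positivity
    have hqm : (0:ℝ) ≤ q ^ m := by positivity
    have hcle : eulerPhi q ^ 2 / Wfun g ≤ (1+q) * (1-q)^2 := by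
      rw [hwq, div_le_iff₀ hq1']
      have h1 : eulerPhi q ≤ (1+q) * (1-q) := by nlinarith
      nlinarith
    calc eulerPhi q ^ 2 / Wfun g * (k * q) ^ m
        = k ^ m * (eulerPhi q ^ 2 / Wfun g * q ^ m) := by rw [hkq]; ring
      _ ≤ k ^ m * ((1+q) * (1-q)^2 * q ^ m) := by
          apply mul_le_mul_of_nonneg_left _ hkm
          exact mul_le_mul_of_nonneg_right hcle hqm
      _ ≤ k ^ m * Wseq g m := by
          exact mul_le_mul_of_nonneg_left (Wseq_ge g q hq0 hq1 hg m) hkm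
  · -- upper bound
    apply ENNReal.tsum_le_tsum
    intro m
    apply ENNReal.ofReal_le_ofReal
    have hkm : (0:ℝ) ≤ k ^ m := by positivity
    calc k ^ m * Wseq g m ≤ k ^ m * q ^ m :=
          mul_le_mul_of_nonneg_left (Wseq_le g q hq0 hq1 hg m) hkm
      _ = (k * q) ^ m := (mul_pow k q m).symm
end

section
/- For every real g ∈ (0, 1/4): the series ∑_{m=0}^∞ W_m(g) is summable with sum equal to W(g), and consequently for every real k ∈ (0, 1] the series ∑_{m=0}^∞ k^m·W_m(g) is summable. In other words, the critical coupling g_c(k) of the height-coupled tree partition function equals 1/4 for all k ∈ (0,1]. -/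
set_option maxHeartbeats 1600000 in
/-- For `g ∈ (0,1/4)`, `∑ W_m(g)` is summable with sum `W(g)`, and for every
`k ∈ (0,1]` the series `∑ k^m W_m(g)` is summable; i.e. `g_c(k) = 1/4` for `k ∈ (0,1]`. -/
theorem stmt_8 (g : ℝ) (hg0 : 0 < g) (hg1 : g < 1/4) :
    HasSum (fun m : ℕ => Wseq g m) (Wfun g) ∧
    ∀ k : ℝ, 0 < k → k ≤ 1 → Summable (fun m : ℕ => k ^ m * Wseq g m) := by
  set s := Real.sqrt (1 - 4 * g) with hs
  have h4g : (0:ℝ) < 1 - 4*g := by linarith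
  have hs0 : 0 < s := Real.sqrt_pos.mpr h4g
  have hs2 : s^2 = 1 - 4*g := Real.sq_sqrt h4g.le
  have hs1 : s < 1 := by nlinarith
  set w := Wfun g with hw
  have hwdef : w = (1 - s)/(2*g) := rfl
  have hgw2 : 2*(g*w) = 1 - s := by rw [hwdef]; field_simp
  have hw1 : 1 < w := by
    rw [hwdef, lt_div_iff₀ (by linarith)]; nlinarith
  have hfix : w * (1 - g*w) = 1 := by
    rw [hwdef]; field_simp; nlinarith
  have hgw : 0 < 1 - g*w := by nlinarith
  have hw2 : w < 2 := by
    rw [hwdef, div_lt_iff₀ (by linarith)]; nlinarith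
  have hXbound : ∀ m, 1 ≤ Xseq g m ∧ Xseq g m ≤ w := by
    intro m
    induction m with
    | zero => exact ⟨le_refl 1, hw1.le⟩
    | succ n ih =>
      obtain ⟨h1, h2⟩ := ih
      have hd : 0 < 1 - g * Xseq g n := by nlinarith
      constructor
      · show 1 ≤ 1 / (1 - g * Xseq g n)
        rw [le_div_iff₀ hd]; nlinarith
      · show 1 / (1 - g * Xseq g n) ≤ w
        rw [div_le_iff₀ hd]; nlinarith
  have hden : ∀ m, 0 < 1 - g * Xseq g m := fun m => by
    have := (hXbound m).2; nlinarith
  have hmono : ∀ m, Xseq g m ≤ Xseq g (m+1) := by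
    intro m
    have h1 := (hXbound m).1
    have h2 := (hXbound m).2
    have hd := hden m
    show Xseq g m ≤ 1 / (1 - g * Xseq g m)
    rw [le_div_iff₀ hd]
    nlinarith [mul_nonneg (sub_nonneg.2 h2) (show (0:ℝ) ≤ 1 - g*(Xseq g m + w) by nlinarith)]
  have hconv : ∀ m, w - Xseq g m ≤ (w-1)^(m+1) := by
    intro m
    induction m with
    | zero => simpa [Xseq] using le_of_eq (by ring)
    | succ n ih =>
      have h1 := (hXbound n).1
      have h2 := (hXbound n).2
      have h2' := (hXbound (n+1)).2
      have hd := hden n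
      have key : (w - Xseq g (n+1)) * (1 - g * Xseq g n) = g*w*(w - Xseq g n) := by
        show (w - 1/(1 - g * Xseq g n)) * _ = _
        field_simp
        nlinarith [hfix]
      have hpow : (0:ℝ) ≤ (w-1)^(n+1) := pow_nonneg (by linarith) _
      have hcn : w - Xseq g (n+1) ≤ (w-1)*(w - Xseq g n) := by
        nlinarith [key, hfix, mul_nonneg (sub_nonneg.2 h2') (sub_nonneg.2 h2)]
      calc w - Xseq g (n+1) ≤ (w-1)*(w - Xseq g n) := hcn
        _ ≤ (w-1)*(w-1)^(n+1) := by nlinarith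
        _ = (w-1)^(n+2) := by ring
  have hXtend : Filter.Tendsto (fun m => Xseq g m) Filter.atTop (nhds w) := by
    have hc0 : (0:ℝ) ≤ w - 1 := by linarith
    have hc1 : w - 1 < 1 := by linarith
    have hpow : Filter.Tendsto (fun m : ℕ => (w-1)^(m+1)) Filter.atTop (nhds 0) := by
      have := tendsto_pow_atTop_nhds_zero_of_lt_one hc0 hc1
      exact this.comp (Filter.tendsto_add_atTop_nat 1)
    have hlow : Filter.Tendsto (fun m : ℕ => w - (w-1)^(m+1)) Filter.atTop (nhds w) := by
      simpa using (tendsto_const_nhds.sub hpow)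
    refine tendsto_of_tendsto_of_tendsto_of_le_of_le hlow tendsto_const_nhds ?_ ?_
    · intro m; have := hconv m; dsimp; linarith
    · intro m; exact (hXbound m).2
  have hWnn : ∀ m, 0 ≤ Wseq g m := by
    intro m
    cases m with
    | zero => norm_num [Wseq]
    | succ n => simpa [Wseq] using sub_nonneg.2 (hmono n)
  have hpartial : ∀ n, ∑ i ∈ Finset.range (n+1), Wseq g i = Xseq g n := by
    intro n
    induction n with
    | zero => simp [Wseq, Xseq]
    | succ n ih => rw [Finset.sum_range_succ, ih]; simp [Wseq]
  have hsummable : Summable (fun m : ℕ => Wseq g m) := by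
    apply summable_of_sum_range_le hWnn (c := w)
    intro n
    cases n with
    | zero => simp; linarith
    | succ n => rw [hpartial n]; exact (hXbound n).2
  have hsum : HasSum (fun m : ℕ => Wseq g m) w := by
    have h := hsummable.hasSum
    have ht : Filter.Tendsto (fun n => ∑ i ∈ Finset.range (n+1), Wseq g i)
        Filter.atTop (nhds (∑' m, Wseq g m)) :=
      h.tendsto_sum_nat.comp (Filter.tendsto_add_atTop_nat 1)
    have ht' : Filter.Tendsto (fun n => Xseq g n) Filter.atTop (nhds (∑' m, Wseq g m)) := by
      simpa [hpartial] using ht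
    have : (∑' m, Wseq g m) = w := tendsto_nhds_unique ht' hXtend
    rwa [this] at h
  refine ⟨hsum, ?_⟩
  intro k hk0 hk1
  apply Summable.of_nonneg_of_le (fun m => mul_nonneg (pow_nonneg hk0.le m) (hWnn m))
    (fun m => ?_) hsummable
  calc k^m * Wseq g m ≤ 1 * Wseq g m := by
        apply mul_le_mul_of_nonneg_right (pow_le_one₀ hk0.le hk1) (hWnn m)
    _ = Wseq g m := one_mul _
end

section
/- For every real k > 1 and every real g ∈ (0, 1/4), the series ∑_{m=0}^∞ k^m·W_m(g) is summable if and only if g < k/(k+1)². In other words, the critical coupling of the height-coupled tree partition function equals g_c(k) = k/(k+1)² for k > 1. -/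
set_option maxHeartbeats 1600000 in
/-- For `k > 1` and `g ∈ (0,1/4)`, the series `∑ k^m W_m(g)` is summable
iff `g < k/(k+1)²`; i.e. the critical coupling is `g_c(k) = k/(k+1)²` for `k > 1`. -/
theorem stmt_9 (k : ℝ) (hk : 1 < k) (g : ℝ) (hg0 : 0 < g) (hg1 : g < 1/4) :
    Summable (fun m : ℕ => k ^ m * Wseq g m) ↔ g < k / (k + 1) ^ 2 := by
  have h4g : 0 < 1 - 4*g := by linarith
  obtain ⟨s, hs_def⟩ : ∃ x : ℝ, x = Real.sqrt (1 - 4*g) := ⟨_, rfl⟩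
  have hs0 : 0 < s := hs_def ▸ Real.sqrt_pos.mpr h4g
  have hs2 : s^2 = 1 - 4*g := hs_def ▸ Real.sq_sqrt h4g.le
  have hs1 : s < 1 := by nlinarith
  have hg2 : (0:ℝ) < 2*g := by linarith
  obtain ⟨a, ha_def⟩ : ∃ x : ℝ, x = (1 - s)/(2*g) := ⟨_, rfl⟩
  obtain ⟨b, hb_def⟩ : ∃ x : ℝ, x = (1 + s)/(2*g) := ⟨_, rfl⟩
  have ha0 : 0 < a := ha_def ▸ div_pos (by linarith) hg2
  have hb0 : 0 < b := hb_def ▸ div_pos (by linarith) hg2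
  have hab : a < b := by rw [ha_def, hb_def, div_lt_div_iff₀ hg2 hg2]; nlinarith
  have hqa : g * a^2 - a + 1 = 0 := by
    rw [ha_def]; field_simp; nlinarith
  have hqb : g * b^2 - b + 1 = 0 := by
    rw [hb_def]; field_simp; nlinarith
  obtain ⟨q, hq_def⟩ : ∃ x : ℝ, x = a/b := ⟨_, rfl⟩
  have hq0 : 0 < q := hq_def ▸ div_pos ha0 hb0
  have hq1 : q < 1 := hq_def ▸ (div_lt_one hb0).mpr hab
  have hbq : b * q = a := by rw [hq_def]; field_simp
  have hprodsum : a * b = a + b := by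
    rw [ha_def, hb_def]; field_simp; nlinarith
  have haq : a = 1 + q := by
    have hb' : b ≠ 0 := ne_of_gt hb0
    rw [hq_def]; field_simp; linear_combination hprodsum
  -- closed form for X
  have Xform : ∀ m : ℕ, Xseq g m = (a - b*q^(m+2))/(1 - q^(m+2)) := by
    intro m
    induction m with
    | zero =>
      have h2 : q^(0+2) < 1 := pow_lt_one₀ hq0.le hq1 (by omega)
      rw [show Xseq g 0 = 1 from rfl, eq_div_iff (by linarith)]
      linear_combination q*hbq + (q-1)*haq
    | succ m ih =>
      have ht1 : q^(m+2) < 1 := pow_lt_one₀ hq0.le hq1 (by omega)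
      have ht0 : 0 < q^(m+2) := pow_pos hq0 _
      have hden : (0:ℝ) < 1 - q^(m+2) := by linarith
      have hnum : 0 < b - a * q^(m+2) := by nlinarith
      have ht1' : q^(m+1+2) < 1 := pow_lt_one₀ hq0.le hq1 (by omega)
      have hden' : (0:ℝ) < 1 - q^(m+1+2) := by linarith
      have hX : 1 - g * Xseq g m = (b - a*q^(m+2))/(a*b*(1 - q^(m+2))) := by
        rw [ih, eq_div_iff (by positivity)]
        field_simp
        linear_combination (-b)*hqa + (a*q^(m+2))*hqb
      rw [show Xseq g (m+1) = 1 / (1 - g * Xseq g m) from rfl, hX, one_div_div,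
        div_eq_div_iff hnum.ne' hden'.ne']
      have hpow : q^(m+1+2) = q * q^(m+2) := by ring
      rw [hpow]
      linear_combination (a*q^(m+2)*(q^(m+2) - 1) + q^(m+2)*b - q^(m+2)*q^(m+2)*a) * hbq
  -- closed form for W
  have Wform : ∀ m : ℕ, Wseq g m =
      (b-a)*(1-q)*q^(m+1)/((1-q^(m+1))*(1-q^(m+2))) := by
    intro m
    cases m with
    | zero =>
      have h1 : q^(0+1) < 1 := pow_lt_one₀ hq0.le hq1 (by omega)
      have h2 : q^(0+2) < 1 := pow_lt_one₀ hq0.le hq1 (by omega)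
      rw [show Wseq g 0 = 1 from rfl, eq_comm,
        div_eq_iff (ne_of_gt (mul_pos (by linarith) (by linarith)))]
      linear_combination (1-q)*hbq + (1-q)^2*haq
    | succ m =>
      have ht1 : q^(m+1) < 1 := pow_lt_one₀ hq0.le hq1 (by omega)
      have ht2 : q^(m+2) < 1 := pow_lt_one₀ hq0.le hq1 (by omega)
      have ht3 : q^(m+3) < 1 := pow_lt_one₀ hq0.le hq1 (by omega)
      have ht3' : q^(m+1+2) < 1 := pow_lt_one₀ hq0.le hq1 (by omega)
      have ht2' : q^(m+1+1) < 1 := pow_lt_one₀ hq0.le hq1 (by omega)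
      rw [show Wseq g (m+1) = Xseq g (m+1) - Xseq g m from rfl, Xform (m+1), Xform m]
      rw [div_sub_div _ _ (ne_of_gt (by linarith : (0:ℝ) < 1 - q^(m+1+2)))
        (ne_of_gt (by linarith : (0:ℝ) < 1 - q^(m+2)))]
      rw [div_eq_div_iff
        (ne_of_gt (mul_pos (by linarith : (0:ℝ) < 1 - q^(m+1+2)) (by linarith : (0:ℝ) < 1 - q^(m+2))))
        (ne_of_gt (mul_pos (by linarith : (0:ℝ) < 1 - q^(m+1+1)) (by linarith : (0:ℝ) < 1 - q^(m+1+2))))]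
      ring
  have hba : 0 < b - a := by linarith
  have hq1' : 0 < 1 - q := by linarith
  obtain ⟨C, hC_def⟩ : ∃ x : ℝ, x = (b-a)*(1-q)*q := ⟨_, rfl⟩
  have hC0 : 0 < C := by rw [hC_def]; positivity
  have hterm : ∀ m : ℕ, k^m * Wseq g m =
      C * (k*q)^m / ((1-q^(m+1))*(1-q^(m+2))) := by
    intro m
    have ht1 : q^(m+1) < 1 := pow_lt_one₀ hq0.le hq1 (by omega)
    have ht2 : q^(m+2) < 1 := pow_lt_one₀ hq0.le hq1 (by omega)
    rw [Wform m, hC_def]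
    rw [mul_div_assoc']
    congr 1
    ring
  have hDpos : ∀ m : ℕ, 0 < (1-q^(m+1))*(1-q^(m+2)) := by
    intro m
    have ht1 : q^(m+1) < 1 := pow_lt_one₀ hq0.le hq1 (by omega)
    have ht2 : q^(m+2) < 1 := pow_lt_one₀ hq0.le hq1 (by omega)
    exact mul_pos (by linarith) (by linarith)
  have hDle : ∀ m : ℕ, (1-q^(m+1))*(1-q^(m+2)) ≤ 1 := by
    intro m
    have ht1 : 0 < q^(m+1) := pow_pos hq0 _
    have ht2 : 0 < q^(m+2) := pow_pos hq0 _
    have ht1' : q^(m+1) < 1 := pow_lt_one₀ hq0.le hq1 (by omega)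
    have ht2' : q^(m+2) < 1 := pow_lt_one₀ hq0.le hq1 (by omega)
    exact mul_le_one₀ (by linarith) (by linarith) (by linarith)
  have hDge : ∀ m : ℕ, (1-q)^2 ≤ (1-q^(m+1))*(1-q^(m+2)) := by
    intro m
    have ht1 : q^(m+1) ≤ q := pow_le_of_le_one hq0.le hq1.le (by omega)
    have ht2 : q^(m+2) ≤ q := pow_le_of_le_one hq0.le hq1.le (by omega)
    rw [sq]
    exact mul_le_mul (by linarith) (by linarith) (by linarith) (by linarith)
  have hkq0 : 0 < k*q := by positivity
  have key : Summable (fun m : ℕ => k ^ m * Wseq g m) ↔ k*q < 1 := by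
    constructor
    · intro hsum
      by_contra hkq
      push_neg at hkq
      have hge : ∀ m : ℕ, C ≤ k^m * Wseq g m := by
        intro m
        rw [hterm m, le_div_iff₀ (hDpos m)]
        have h1 : (1:ℝ) ≤ (k*q)^m := by simpa using pow_le_pow_left₀ (by norm_num) hkq m
        calc C * ((1-q^(m+1))*(1-q^(m+2))) ≤ C * 1 := mul_le_mul_of_nonneg_left (hDle m) hC0.le
          _ = C := mul_one C
          _ ≤ C * (k*q)^m := le_mul_of_one_le_right hC0.le h1
      have := ge_of_tendsto' hsum.tendsto_atTop_zero hge
      linarith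
    · intro hkq
      apply Summable.of_nonneg_of_le (f := fun m => (C/(1-q)^2) * (k*q)^m)
      · intro m
        rw [hterm m]
        exact le_of_lt (div_pos (by positivity) (hDpos m))
      · intro m
        rw [hterm m]
        calc C * (k*q)^m / ((1-q^(m+1))*(1-q^(m+2))) ≤ C * (k*q)^m / (1-q)^2 :=
              div_le_div_of_nonneg_left (by positivity) (by positivity) (hDge m)
          _ = (C/(1-q)^2) * (k*q)^m := by ring
      · exact (summable_geometric_of_lt_one hkq0.le hkq).mul_left _
  rw [key]
  have h1s : (0:ℝ) < 1 + s := by linarith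
  have hq_eq : q = (1-s)/(1+s) := by
    rw [hq_def, ha_def, hb_def]
    rw [div_div_div_eq]
    rw [div_eq_div_iff (by positivity) (by positivity)]
    ring
  have hk1 : (0:ℝ) < k + 1 := by linarith
  constructor
  · intro h
    have h2 : k * (1-s) < 1 + s := by
      rw [hq_eq, ← mul_div_assoc, div_lt_one h1s] at h
      linarith
    rw [lt_div_iff₀ (by positivity)]
    nlinarith [sq_nonneg (s*(k+1) - (k-1))]
  · intro h
    rw [lt_div_iff₀ (by positivity)] at h
    have h2 : k - 1 < (k+1)*s := by
      by_contra hcon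
      push_neg at hcon
      have hsq : ((k+1)*s)*((k+1)*s) ≤ (k-1)*(k-1) :=
        mul_self_le_mul_self (mul_nonneg (by linarith) hs0.le) hcon
      have h3 : (k+1)^2*s^2 = (k+1)^2*(1-4*g) := by rw [hs2]
      nlinarith [hsq, h3]
    rw [hq_eq, ← mul_div_assoc, div_lt_one h1s]
    nlinarith
end

section
/- For every n ∈ ℕ, every real t, and every function w : ℕ → ℝ, the identity ∑_{r=1}^n ∑_{s=1}^n r·C(r+s−1, r)·w_r·w_s·t^{r+s} = ∑_{k=1}^n k·(∑_{s=1}^n C(s,k)·w_s·t^s)² holds; in particular, the left-hand side is nonnegative. -/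
open Finset

lemma vand (r s n : ℕ) (hr : 1 ≤ r) (hs : 1 ≤ s) (hsn : s ≤ n) :
    ∑ j ∈ range n, Nat.choose (r - 1) j * Nat.choose s (j + 1)
      = Nat.choose (r + s - 1) r := by
  have h1 : ∑ j ∈ range n, Nat.choose (r - 1) j * Nat.choose s (j + 1)
      = ∑ j ∈ range s, Nat.choose (r - 1) j * Nat.choose s (j + 1) := by
    refine (Finset.sum_subset (Finset.range_subset_range.mpr hsn) ?_).symm
    intro j _ hj
    simp only [Finset.mem_range, not_lt] at hj
    rw [Nat.choose_eq_zero_of_lt (show s < j + 1 by omega), mul_zero]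
  have h2 : ∑ j ∈ range s, Nat.choose (r - 1) j * Nat.choose s (j + 1)
      = ∑ j ∈ range s, Nat.choose (r - 1) j * Nat.choose s (s - 1 - j) := by
    refine Finset.sum_congr rfl fun j hj => ?_
    simp only [Finset.mem_range] at hj
    have : s - 1 - j = s - (j + 1) := by omega
    rw [this, Nat.choose_symm (by omega)]
  have h3 : ∑ j ∈ range s, Nat.choose (r - 1) j * Nat.choose s (s - 1 - j)
      = Nat.choose (r - 1 + s) (s - 1) := by
    rw [Nat.add_choose_eq]
    rw [Finset.Nat.sum_antidiagonal_eq_sum_range_succ_mk]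
    have hs1 : s - 1 + 1 = s := by omega
    simp only [Nat.succ_eq_add_one, hs1]
  have h4 : r - 1 + s = r + s - 1 := by omega
  have h5 : Nat.choose (r + s - 1) (s - 1) = Nat.choose (r + s - 1) r := by
    have : r + s - 1 - r = s - 1 := by omega
    rw [← this, Nat.choose_symm (by omega)]
  rw [h1, h2, h3, h4, h5]

lemma key_s11 (r s n : ℕ) (hr : r ∈ Finset.Icc 1 n) (hs : s ∈ Finset.Icc 1 n) :
    ∑ k ∈ Finset.Icc 1 n, k * Nat.choose r k * Nat.choose s k
      = r * Nat.choose (r + s - 1) r := by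
  simp only [Finset.mem_Icc] at hr hs
  have hre : ∑ k ∈ Finset.Icc 1 n, k * Nat.choose r k * Nat.choose s k
      = ∑ j ∈ range n, (j + 1) * Nat.choose r (j + 1) * Nat.choose s (j + 1) := by
    rw [← Finset.Ico_add_one_right_eq_Icc, Finset.sum_Ico_eq_sum_range]
    simp only [Nat.succ_sub_one, Nat.add_sub_cancel]
    refine Finset.sum_congr rfl fun j _ => ?_
    rw [add_comm 1 j]
  rw [hre]
  have hterm : ∀ j, (j + 1) * Nat.choose r (j + 1) = r * Nat.choose (r - 1) j := by
    intro j
    have h := Nat.add_one_mul_choose_eq (r - 1) j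
    have hr1 : r - 1 + 1 = r := by omega
    simp only [Nat.succ_eq_add_one, hr1] at h
    exact (mul_comm _ _).trans h.symm
  calc ∑ j ∈ range n, (j + 1) * Nat.choose r (j + 1) * Nat.choose s (j + 1)
      = ∑ j ∈ range n, r * (Nat.choose (r - 1) j * Nat.choose s (j + 1)) := by
        refine Finset.sum_congr rfl fun j _ => ?_
        rw [hterm j, mul_assoc]
    _ = r * ∑ j ∈ range n, Nat.choose (r - 1) j * Nat.choose s (j + 1) := by
        rw [Finset.mul_sum]
    _ = r * Nat.choose (r + s - 1) r := by rw [vand r s n hr.1 hs.1 hs.2]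

/-- For every `n`, real `t` and `w : ℕ → ℝ`,
`∑_{r=1}^n ∑_{s=1}^n r·C(r+s-1,r)·w_r·w_s·t^{r+s} = ∑_{k=1}^n k·(∑_{s=1}^n C(s,k)·w_s·t^s)²`;
in particular the left-hand side is nonnegative. -/
theorem stmt_11 (n : ℕ) (t : ℝ) (w : ℕ → ℝ) :
    (∑ r ∈ Finset.Icc 1 n, ∑ s ∈ Finset.Icc 1 n,
        (r : ℝ) * (Nat.choose (r + s - 1) r : ℝ) * w r * w s * t ^ (r + s))
      = ∑ k ∈ Finset.Icc 1 n,
          (k : ℝ) * (∑ s ∈ Finset.Icc 1 n, (Nat.choose s k : ℝ) * w s * t ^ s) ^ 2 ∧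
    0 ≤ ∑ r ∈ Finset.Icc 1 n, ∑ s ∈ Finset.Icc 1 n,
        (r : ℝ) * (Nat.choose (r + s - 1) r : ℝ) * w r * w s * t ^ (r + s) := by
  have heq : (∑ r ∈ Finset.Icc 1 n, ∑ s ∈ Finset.Icc 1 n,
        (r : ℝ) * (Nat.choose (r + s - 1) r : ℝ) * w r * w s * t ^ (r + s))
      = ∑ k ∈ Finset.Icc 1 n,
          (k : ℝ) * (∑ s ∈ Finset.Icc 1 n, (Nat.choose s k : ℝ) * w s * t ^ s) ^ 2 := by
    have lhs_eq : (∑ r ∈ Finset.Icc 1 n, ∑ s ∈ Finset.Icc 1 n,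
          (r : ℝ) * (Nat.choose (r + s - 1) r : ℝ) * w r * w s * t ^ (r + s))
        = ∑ r ∈ Finset.Icc 1 n, ∑ s ∈ Finset.Icc 1 n, ∑ k ∈ Finset.Icc 1 n,
            (k : ℝ) * (Nat.choose r k : ℝ) * (Nat.choose s k : ℝ) * w r * w s * t ^ (r + s) := by
      refine Finset.sum_congr rfl fun r hr => Finset.sum_congr rfl fun s hs => ?_
      have h := key_s11 r s n hr hs
      have hc : ((r : ℝ) * (Nat.choose (r + s - 1) r : ℝ))
          = ∑ k ∈ Finset.Icc 1 n, (k : ℝ) * (Nat.choose r k : ℝ) * (Nat.choose s k : ℝ) := by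
        have := congrArg (Nat.cast : ℕ → ℝ) h.symm
        push_cast at this
        rw [← this]
      calc (r : ℝ) * (Nat.choose (r + s - 1) r : ℝ) * w r * w s * t ^ (r + s)
          = ((r : ℝ) * (Nat.choose (r + s - 1) r : ℝ)) * (w r * w s * t ^ (r + s)) := by ring
        _ = (∑ k ∈ Finset.Icc 1 n, (k : ℝ) * (Nat.choose r k : ℝ) * (Nat.choose s k : ℝ))
              * (w r * w s * t ^ (r + s)) := by rw [hc]
        _ = ∑ k ∈ Finset.Icc 1 n,
              (k : ℝ) * (Nat.choose r k : ℝ) * (Nat.choose s k : ℝ) * w r * w s * t ^ (r + s) := by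
            rw [Finset.sum_mul]; refine Finset.sum_congr rfl fun k _ => by ring
    rw [lhs_eq]
    rw [show (∑ r ∈ Finset.Icc 1 n, ∑ s ∈ Finset.Icc 1 n, ∑ k ∈ Finset.Icc 1 n,
            (k : ℝ) * (Nat.choose r k : ℝ) * (Nat.choose s k : ℝ) * w r * w s * t ^ (r + s))
        = ∑ k ∈ Finset.Icc 1 n, ∑ r ∈ Finset.Icc 1 n, ∑ s ∈ Finset.Icc 1 n,
            (k : ℝ) * (Nat.choose r k : ℝ) * (Nat.choose s k : ℝ) * w r * w s * t ^ (r + s) from by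
      rw [show (∑ r ∈ Finset.Icc 1 n, ∑ s ∈ Finset.Icc 1 n, ∑ k ∈ Finset.Icc 1 n,
            (k : ℝ) * (Nat.choose r k : ℝ) * (Nat.choose s k : ℝ) * w r * w s * t ^ (r + s))
        = ∑ r ∈ Finset.Icc 1 n, ∑ k ∈ Finset.Icc 1 n, ∑ s ∈ Finset.Icc 1 n,
            (k : ℝ) * (Nat.choose r k : ℝ) * (Nat.choose s k : ℝ) * w r * w s * t ^ (r + s) from
        Finset.sum_congr rfl fun r _ => Finset.sum_comm ..]
      exact Finset.sum_comm ..]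
    refine Finset.sum_congr rfl fun k _ => ?_
    rw [sq, Finset.sum_mul_sum, Finset.mul_sum]
    refine Finset.sum_congr rfl fun r _ => ?_
    rw [Finset.mul_sum]
    refine Finset.sum_congr rfl fun s _ => ?_
    rw [pow_add]; ring
  refine ⟨heq, ?_⟩
  rw [heq]
  exact Finset.sum_nonneg fun k _ => mul_nonneg (Nat.cast_nonneg k) (sq_nonneg _)
end

section
/- Let t ∈ (0, 1) be real, let n ≥ 1, and let w : ℕ → ℝ satisfy w_0 = 0 and w_s = 0 for all s > n. If ∑_{r=1}^n ∑_{s=1}^n r·C(r+s−1, r)·w_r·w_s·t^{r+s} = 0, then w_s = 0 for all s. That is, the quadratic form with kernel K_{r,s} = r·C(r+s−1, r)·t^{r+s} (r, s ≥ 1) is positive definite on finitely supported real sequences. -/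
open Finset

/-- Vandermonde-type identity: `C(a+b+1, a+1) = ∑_{i<n} C(a,i)·C(b+1,i+1)` for `a,b < n`. -/
lemma aux_vdm (a b n : ℕ) (ha : a < n) (hb : b < n) :
    Nat.choose (a + b + 1) (a + 1)
      = ∑ i ∈ range n, Nat.choose a i * Nat.choose (b + 1) (i + 1) := by
  have h1 : ∑ i ∈ range n, Nat.choose a i * Nat.choose (b + 1) (i + 1)
      = ∑ i ∈ range (b + 1), Nat.choose a i * Nat.choose (b + 1) (i + 1) := by
    symm
    apply Finset.sum_subset
    · exact range_subset_range.mpr hb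
    · intro i _ hi
      have hbi : b + 1 < i + 1 := by
        simp only [mem_range] at hi
        omega
      rw [Nat.choose_eq_zero_of_lt hbi, Nat.mul_zero]
  have h2 : Nat.choose (a + b + 1) (a + 1) = Nat.choose (a + (b + 1)) b := by
    have h0 := Nat.choose_symm (n := a + b + 1) (k := a + 1) (by omega)
    have hsub : a + b + 1 - (a + 1) = b := by omega
    rw [hsub] at h0
    calc Nat.choose (a + b + 1) (a + 1) = Nat.choose (a + b + 1) b := h0.symm
      _ = Nat.choose (a + (b + 1)) b := by rw [show a + (b + 1) = a + b + 1 from by omega]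
  rw [h1, h2, Nat.add_choose_eq, Finset.Nat.sum_antidiagonal_eq_sum_range_succ_mk]
  apply Finset.sum_congr rfl
  intro i hi
  simp only [mem_range] at hi
  congr 1
  have hle : i + 1 ≤ b + 1 := by omega
  have := Nat.choose_symm (n := b + 1) (k := i + 1) hle
  have hsub : b + 1 - (i + 1) = b - i := by omega
  rw [hsub] at this
  rw [this]

/-- Gram decomposition: `r·C(r+s-1, r) = ∑_{j=1}^n j·C(r,j)·C(s,j)` for `1 ≤ r,s ≤ n`. -/
lemma aux_gram (r s n : ℕ) (hr : 1 ≤ r) (hs : 1 ≤ s) (hrn : r ≤ n) (hsn : s ≤ n) :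
    r * Nat.choose (r + s - 1) r
      = ∑ j ∈ Finset.Icc 1 n, j * Nat.choose r j * Nat.choose s j := by
  obtain ⟨a, rfl⟩ : ∃ a, r = a + 1 := ⟨r - 1, by omega⟩
  obtain ⟨b, rfl⟩ : ∃ b, s = b + 1 := ⟨s - 1, by omega⟩
  have hsum : ∑ j ∈ Finset.Icc 1 n, j * Nat.choose (a + 1) j * Nat.choose (b + 1) j
      = ∑ i ∈ range n, (i + 1) * Nat.choose (a + 1) (i + 1) * Nat.choose (b + 1) (i + 1) := by
    rw [show Finset.Icc 1 n = Finset.Ico 1 (n + 1) by rw [Finset.Ico_add_one_right_eq_Icc]]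
    rw [Finset.sum_Ico_eq_sum_range]
    apply Finset.sum_congr rfl
    intro i _
    rw [Nat.add_comm 1 i]
  rw [hsum]
  have hterm : ∀ i, (i + 1) * Nat.choose (a + 1) (i + 1) * Nat.choose (b + 1) (i + 1)
      = (a + 1) * (Nat.choose a i * Nat.choose (b + 1) (i + 1)) := by
    intro i
    have := Nat.add_one_mul_choose_eq a i
    calc (i + 1) * Nat.choose (a + 1) (i + 1) * Nat.choose (b + 1) (i + 1)
        = (Nat.choose (a + 1) (i + 1) * (i + 1)) * Nat.choose (b + 1) (i + 1) := by ring
      _ = ((a + 1) * Nat.choose a i) * Nat.choose (b + 1) (i + 1) := by rw [← this]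
      _ = (a + 1) * (Nat.choose a i * Nat.choose (b + 1) (i + 1)) := by ring
  simp only [hterm]
  rw [← Finset.mul_sum, ← aux_vdm a b n (by omega) (by omega)]
  congr 2
  omega

/-- For `t ∈ (0,1)`, `n ≥ 1`, and `w : ℕ → ℝ` supported in `{1,…,n}`,
vanishing of the quadratic form `∑_{r,s} r·C(r+s-1,r)·w_r·w_s·t^{r+s}` forces `w = 0`;
i.e. the kernel `r·C(r+s-1,r)·t^{r+s}` is positive definite on finitely supported sequences. -/
theorem stmt_12 (t : ℝ) (ht0 : 0 < t) (ht1 : t < 1) (n : ℕ) (hn : 1 ≤ n) (w : ℕ → ℝ)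
    (hw0 : w 0 = 0) (hwn : ∀ s : ℕ, n < s → w s = 0)
    (h : (∑ r ∈ Finset.Icc 1 n, ∑ s ∈ Finset.Icc 1 n,
        (r : ℝ) * (Nat.choose (r + s - 1) r : ℝ) * w r * w s * t ^ (r + s)) = 0) :
    ∀ s : ℕ, w s = 0 := by
  -- define S j
  set S : ℕ → ℝ := fun j => ∑ r ∈ Finset.Icc 1 n, (Nat.choose r j : ℝ) * w r * t ^ r with hS
  -- rewrite the quadratic form as ∑ j, j * (S j)^2
  have hform : (∑ r ∈ Finset.Icc 1 n, ∑ s ∈ Finset.Icc 1 n,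
      (r : ℝ) * (Nat.choose (r + s - 1) r : ℝ) * w r * w s * t ^ (r + s))
      = ∑ j ∈ Finset.Icc 1 n, (j : ℝ) * (S j) ^ 2 := by
    have step1 : ∀ r ∈ Finset.Icc 1 n, ∀ s ∈ Finset.Icc 1 n,
        (r : ℝ) * (Nat.choose (r + s - 1) r : ℝ) * w r * w s * t ^ (r + s)
        = ∑ j ∈ Finset.Icc 1 n, (j : ℝ) *
            ((Nat.choose r j : ℝ) * w r * t ^ r) * ((Nat.choose s j : ℝ) * w s * t ^ s) := by
      intro r hr s hs
      simp only [Finset.mem_Icc] at hr hs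
      have hid := aux_gram r s n hr.1 hs.1 hr.2 hs.2
      have hidR : ((r : ℝ) * (Nat.choose (r + s - 1) r : ℝ))
          = ∑ j ∈ Finset.Icc 1 n, (j : ℝ) * (Nat.choose r j : ℝ) * (Nat.choose s j : ℝ) := by
        have := congrArg (fun x : ℕ => (x : ℝ)) hid
        push_cast at this
        exact this
      calc (r : ℝ) * (Nat.choose (r + s - 1) r : ℝ) * w r * w s * t ^ (r + s)
          = ((r : ℝ) * (Nat.choose (r + s - 1) r : ℝ)) * (w r * w s * (t ^ r * t ^ s)) := by
            rw [pow_add]; ring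
        _ = (∑ j ∈ Finset.Icc 1 n, (j : ℝ) * (Nat.choose r j : ℝ) * (Nat.choose s j : ℝ))
              * (w r * w s * (t ^ r * t ^ s)) := by rw [hidR]
        _ = ∑ j ∈ Finset.Icc 1 n, (j : ℝ) *
              ((Nat.choose r j : ℝ) * w r * t ^ r) * ((Nat.choose s j : ℝ) * w s * t ^ s) := by
            rw [Finset.sum_mul]; apply Finset.sum_congr rfl; intro j _; ring
    calc (∑ r ∈ Finset.Icc 1 n, ∑ s ∈ Finset.Icc 1 n,
          (r : ℝ) * (Nat.choose (r + s - 1) r : ℝ) * w r * w s * t ^ (r + s))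
        = ∑ r ∈ Finset.Icc 1 n, ∑ s ∈ Finset.Icc 1 n, ∑ j ∈ Finset.Icc 1 n, (j : ℝ) *
            ((Nat.choose r j : ℝ) * w r * t ^ r) * ((Nat.choose s j : ℝ) * w s * t ^ s) := by
          apply Finset.sum_congr rfl; intro r hr
          apply Finset.sum_congr rfl; intro s hs
          exact step1 r hr s hs
      _ = ∑ j ∈ Finset.Icc 1 n, ∑ r ∈ Finset.Icc 1 n, ∑ s ∈ Finset.Icc 1 n, (j : ℝ) *
            ((Nat.choose r j : ℝ) * w r * t ^ r) * ((Nat.choose s j : ℝ) * w s * t ^ s) := by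
          rw [show (∑ r ∈ Finset.Icc 1 n, ∑ s ∈ Finset.Icc 1 n, ∑ j ∈ Finset.Icc 1 n, (j : ℝ) *
            ((Nat.choose r j : ℝ) * w r * t ^ r) * ((Nat.choose s j : ℝ) * w s * t ^ s))
            = ∑ r ∈ Finset.Icc 1 n, ∑ j ∈ Finset.Icc 1 n, ∑ s ∈ Finset.Icc 1 n, (j : ℝ) *
            ((Nat.choose r j : ℝ) * w r * t ^ r) * ((Nat.choose s j : ℝ) * w s * t ^ s)
            from Finset.sum_congr rfl fun r _ => Finset.sum_comm]
          exact Finset.sum_comm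
      _ = ∑ j ∈ Finset.Icc 1 n, (j : ℝ) * (S j) ^ 2 := by
          apply Finset.sum_congr rfl
          intro j _
          calc ∑ r ∈ Finset.Icc 1 n, ∑ s ∈ Finset.Icc 1 n, (j : ℝ) *
                ((Nat.choose r j : ℝ) * w r * t ^ r) * ((Nat.choose s j : ℝ) * w s * t ^ s)
              = (∑ r ∈ Finset.Icc 1 n, (j : ℝ) * ((Nat.choose r j : ℝ) * w r * t ^ r))
                  * (∑ s ∈ Finset.Icc 1 n, ((Nat.choose s j : ℝ) * w s * t ^ s)) := by
                rw [Finset.sum_mul_sum]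
            _ = ((j : ℝ) * S j) * S j := by rw [← Finset.mul_sum]
            _ = (j : ℝ) * (S j) ^ 2 := by ring
  -- each term of the sum is nonnegative, so each vanishes
  rw [hform] at h
  have hSzero : ∀ j ∈ Finset.Icc 1 n, S j = 0 := by
    intro j hj
    have hnonneg : ∀ i ∈ Finset.Icc 1 n, (0 : ℝ) ≤ (i : ℝ) * (S i) ^ 2 := by
      intro i _
      positivity
    have := (Finset.sum_eq_zero_iff_of_nonneg hnonneg).mp h j hj
    simp only [Finset.mem_Icc] at hj
    have hjpos : (0 : ℝ) < (j : ℝ) := by exact_mod_cast hj.1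
    have : (S j) ^ 2 = 0 := by
      by_contra hne
      have : (0 : ℝ) < (S j) ^ 2 := lt_of_le_of_ne (sq_nonneg _) (Ne.symm hne)
      nlinarith
    exact pow_eq_zero_iff (n := 2) (by norm_num) |>.mp this
  -- downward induction: w s = 0 for all s
  have key : ∀ d : ℕ, ∀ s : ℕ, n < s + d → w s = 0 := by
    intro d
    induction d with
    | zero => intro s hs; exact hwn s (by omega)
    | succ d ih =>
      intro s hs
      by_cases hcase : n < s + d
      · exact ih s hcase
      · -- here s + d = n, i.e. s = n - d
        rcases Nat.eq_zero_or_pos s with rfl | hspos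
        · exact hw0
        · have hsn : s ≤ n := by omega
          have hSs := hSzero s (Finset.mem_Icc.mpr ⟨hspos, hsn⟩)
          simp only [hS] at hSs
          have hsingle : ∑ r ∈ Finset.Icc 1 n, (Nat.choose r s : ℝ) * w r * t ^ r
              = (Nat.choose s s : ℝ) * w s * t ^ s := by
            apply Finset.sum_eq_single s
            · intro r hr hrs
              simp only [Finset.mem_Icc] at hr
              rcases lt_or_gt_of_ne hrs with hlt | hgt
              · rw [Nat.choose_eq_zero_of_lt hlt]; ring
              · have : w r = 0 := ih r (by omega)
                rw [this]; ring
            · intro hsnot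
              exact absurd (Finset.mem_Icc.mpr ⟨hspos, hsn⟩) hsnot
          rw [hsingle, Nat.choose_self] at hSs
          have htne : t ^ s ≠ 0 := pow_ne_zero s (ne_of_gt ht0)
          have : w s * t ^ s = 0 := by push_cast at hSs; linarith
          rcases mul_eq_zero.mp this with h' | h'
          · exact h'
          · exact absurd h' htne
  intro s
  rcases Nat.eq_zero_or_pos s with rfl | hspos
  · exact hw0
  · exact key n s (by omega)
end

section
/- For every real g with 0 ≤ g < 1/4, the series ∑_{n=0}^∞ C(2n+1, n+1)·g^{n+1} is summable with sum (1 − √(1−4g))/(2√(1−4g)). (This is the trace of the pure CDT transfer matrix: ∑_{s=1}^∞ C(2s−1, s)·g^s.) -/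
open Finset

private def cb (n : ℕ) : ℝ := (Nat.centralBinom n : ℝ)

private lemma cb_nonneg (n : ℕ) : 0 ≤ cb n := Nat.cast_nonneg _

private lemma cb_zero : cb 0 = 1 := by simp [cb, Nat.centralBinom_zero]

private lemma cb_rec (k : ℕ) : ((k : ℝ) + 1) * cb (k + 1) = 2 * (2 * k + 1) * cb k := by
  have h := Nat.succ_mul_centralBinom_succ k
  have := congrArg (fun m : ℕ => (m : ℝ)) h
  push_cast at this
  simpa [cb, mul_comm, mul_assoc, mul_left_comm] using this

private lemma cb_le (n : ℕ) : cb n ≤ 4 ^ n := by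
  have h : Nat.centralBinom n ≤ 4 ^ n := by
    have h1 : Nat.centralBinom n ≤ ∑ i ∈ range (2 * n + 1), (2 * n).choose i := by
      rw [Nat.centralBinom]
      exact Finset.single_le_sum (fun i _ => Nat.zero_le _)
        (Finset.mem_range.mpr (by omega))
    have h2 : ∑ i ∈ range (2 * n + 1), (2 * n).choose i = 2 ^ (2 * n) :=
      Nat.sum_range_choose (2 * n)
    calc Nat.centralBinom n ≤ 2 ^ (2 * n) := h1.trans_eq h2
      _ = 4 ^ n := by rw [pow_mul]; norm_num
  unfold cb
  calc ((Nat.centralBinom n : ℕ) : ℝ) ≤ ((4 ^ n : ℕ) : ℝ) := by exact_mod_cast h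
    _ = 4 ^ n := by push_cast; ring

private def aa (n : ℕ) : ℝ := ∑ k ∈ range (n + 1), cb k * cb (n - k)

private def bb (n : ℕ) : ℝ := ∑ k ∈ range (n + 1), (k : ℝ) * cb k * cb (n - k)

private lemma two_bb (n : ℕ) : 2 * bb n = n * aa n := by
  have hrefl : bb n = ∑ k ∈ range (n + 1), ((n - k : ℕ) : ℝ) * cb (n - k) * cb k := by
    unfold bb
    rw [← Finset.sum_range_reflect]
    apply Finset.sum_congr rfl
    intro j hj
    have hj' : j < n + 1 := Finset.mem_range.mp hj
    have h1 : n + 1 - 1 - j = n - j := by omega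
    have h2 : n - (n - j) = j := by omega
    rw [h1, h2]
  have : 2 * bb n = bb n + bb n := by ring
  rw [this]
  nth_rewrite 2 [hrefl]
  unfold bb aa
  rw [← Finset.sum_add_distrib, Finset.mul_sum]
  apply Finset.sum_congr rfl
  intro k hk
  have hk' : k < n + 1 := Finset.mem_range.mp hk
  have : ((n - k : ℕ) : ℝ) = (n : ℝ) - k := by
    have : k ≤ n := by omega
    push_cast [this]; ring
  rw [this]; ring

private lemma bb_succ (n : ℕ) : bb (n + 1) = 2 * ((n : ℝ) + 1) * aa n := by
  have h : bb (n + 1) = ∑ j ∈ range (n + 1), ((j : ℝ) + 1) * cb (j + 1) * cb (n - j) := by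
    unfold bb
    rw [Finset.sum_range_succ']
    simp only [Nat.cast_zero, zero_mul, add_zero]
    apply Finset.sum_congr rfl
    intro j hj
    have : n + 1 - (j + 1) = n - j := by omega
    rw [this]; push_cast; ring
  rw [h]
  have h2 : ∀ j ∈ range (n + 1), ((j : ℝ) + 1) * cb (j + 1) * cb (n - j)
      = 4 * ((j : ℝ) * cb j * cb (n - j)) + 2 * (cb j * cb (n - j)) := by
    intro j _
    rw [cb_rec j]; ring
  rw [Finset.sum_congr rfl h2, Finset.sum_add_distrib, ← Finset.mul_sum, ← Finset.mul_sum]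
  have := two_bb n
  unfold bb aa at *
  nlinarith [this]

private lemma aa_eq (n : ℕ) : aa n = 4 ^ n := by
  induction n with
  | zero => simp [aa, cb_zero]
  | succ n ih =>
    have h1 : ((n : ℝ) + 1) * aa (n + 1) = 2 * bb (n + 1) := by
      have := two_bb (n + 1); push_cast at this; linarith
    rw [bb_succ n, ih] at h1
    have hne : ((n : ℝ) + 1) ≠ 0 := by positivity
    have h2 : ((n : ℝ) + 1) * aa (n + 1) = ((n : ℝ) + 1) * (4 * 4 ^ n) := by
      rw [h1]; ring
    have := mul_left_cancel₀ hne h2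
    rw [this]; ring

private lemma central_hasSum (g : ℝ) (hg0 : 0 ≤ g) (hg1 : g < 1/4) :
    HasSum (fun n : ℕ => cb n * g ^ n) (1 / Real.sqrt (1 - 4 * g)) := by
  have h4g : 0 ≤ 4 * g := by linarith
  have h4g1 : 4 * g < 1 := by linarith
  have hpos : 0 < 1 - 4 * g := by linarith
  have hnorm : Summable fun n : ℕ => ‖cb n * g ^ n‖ := by
    apply Summable.of_nonneg_of_le (fun n => norm_nonneg _)
      (fun n => ?_) (summable_geometric_of_lt_one h4g h4g1)
    rw [Real.norm_eq_abs, abs_of_nonneg (mul_nonneg (cb_nonneg n) (by positivity))]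
    calc cb n * g ^ n ≤ 4 ^ n * g ^ n :=
          mul_le_mul_of_nonneg_right (cb_le n) (by positivity)
      _ = (4 * g) ^ n := by rw [mul_pow]
  have hsummable : Summable fun n : ℕ => cb n * g ^ n := hnorm.of_norm
  set S := ∑' n : ℕ, cb n * g ^ n with hS
  have hSsum : HasSum (fun n : ℕ => cb n * g ^ n) S := hsummable.hasSum
  -- Cauchy product
  have hcauchy := hasSum_sum_range_mul_of_summable_norm hnorm hnorm
  have hconv : ∀ n : ℕ, (∑ k ∈ range (n + 1), (cb k * g ^ k) * (cb (n - k) * g ^ (n - k)))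
      = (4 * g) ^ n := by
    intro n
    have : ∀ k ∈ range (n + 1), (cb k * g ^ k) * (cb (n - k) * g ^ (n - k))
        = (cb k * cb (n - k)) * g ^ n := by
      intro k hk
      have hk' : k < n + 1 := Finset.mem_range.mp hk
      have : g ^ k * g ^ (n - k) = g ^ n := by
        rw [← pow_add]; congr 1; omega
      calc (cb k * g ^ k) * (cb (n - k) * g ^ (n - k))
          = (cb k * cb (n - k)) * (g ^ k * g ^ (n - k)) := by ring
        _ = (cb k * cb (n - k)) * g ^ n := by rw [this]
    rw [Finset.sum_congr rfl this, ← Finset.sum_mul]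
    have : (∑ k ∈ range (n + 1), cb k * cb (n - k)) = aa n := rfl
    rw [this, aa_eq, mul_pow]
  simp only [hconv] at hcauchy
  have hgeo : HasSum (fun n : ℕ => (4 * g) ^ n) (1 / (1 - 4 * g)) := by
    simpa [one_div] using hasSum_geometric_of_lt_one h4g h4g1
  have hSS : S * S = 1 / (1 - 4 * g) := hcauchy.unique hgeo
  -- S ≥ 0
  have hS0 : 0 ≤ S := tsum_nonneg (fun n => mul_nonneg (cb_nonneg n) (by positivity))
  -- S = 1 / sqrt (1 - 4g)
  have hsq : Real.sqrt (1 - 4 * g) > 0 := Real.sqrt_pos.mpr hpos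
  have hsq2 : Real.sqrt (1 - 4 * g) ^ 2 = 1 - 4 * g := Real.sq_sqrt hpos.le
  have hSval : S = 1 / Real.sqrt (1 - 4 * g) := by
    have h1 : (S - 1 / Real.sqrt (1 - 4 * g)) * (S + 1 / Real.sqrt (1 - 4 * g)) = 0 := by
      have hmul : Real.sqrt (1 - 4 * g) * Real.sqrt (1 - 4 * g) = 1 - 4 * g :=
        Real.mul_self_sqrt hpos.le
      have : S * S - (1 / Real.sqrt (1 - 4 * g)) * (1 / Real.sqrt (1 - 4 * g)) = 0 := by
        rw [hSS, one_div, one_div, ← mul_inv, hmul]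
        simp
      nlinarith [this]
    have h2 : S + 1 / Real.sqrt (1 - 4 * g) > 0 := by positivity
    have := mul_eq_zero.mp h1
    rcases this with h | h
    · linarith
    · linarith
  rw [← hSval]; exact hSsum

/-- For `0 ≤ g < 1/4`, `∑_{n≥0} C(2n+1, n+1)·g^{n+1}` is summable with sum
`(1 - √(1-4g))/(2√(1-4g))` (the trace of the pure CDT transfer matrix). -/
theorem stmt_13 (g : ℝ) (hg0 : 0 ≤ g) (hg1 : g < 1/4) :
    HasSum (fun n : ℕ => (Nat.choose (2 * n + 1) (n + 1) : ℝ) * g ^ (n + 1))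
      ((1 - Real.sqrt (1 - 4 * g)) / (2 * Real.sqrt (1 - 4 * g))) := by
  have hpos : 0 < 1 - 4 * g := by linarith
  have hsq : 0 < Real.sqrt (1 - 4 * g) := Real.sqrt_pos.mpr hpos
  have hmain := central_hasSum g hg0 hg1
  -- shift: HasSum (fun n => cb (n+1) * g^(n+1)) (S - 1)
  have hshift : HasSum (fun n : ℕ => cb (n + 1) * g ^ (n + 1))
      (1 / Real.sqrt (1 - 4 * g) - 1) := by
    refine (hasSum_nat_add_iff (f := fun n : ℕ => cb n * g ^ n) 1).mpr ?_
    simpa [cb_zero] using hmain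
  -- choose identity: 2 * C(2n+1, n+1) = centralBinom (n+1)
  have hid : ∀ n : ℕ, cb (n + 1) = 2 * (Nat.choose (2 * n + 1) (n + 1) : ℝ) := by
    intro n
    have h1 : Nat.centralBinom (n + 1) = (2 * n + 2).choose (n + 1) := by
      rw [Nat.centralBinom_eq_two_mul_choose, show 2 * (n + 1) = 2 * n + 2 from by omega]
    have h2 : (2 * n + 2).choose (n + 1) = (2 * n + 1).choose n + (2 * n + 1).choose (n + 1) :=
      Nat.choose_succ_succ (2 * n + 1) n
    have h3 : (2 * n + 1).choose n = (2 * n + 1).choose (n + 1) := by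
      rw [← Nat.choose_symm (by omega : n ≤ 2 * n + 1)]
      congr 1; omega
    have : Nat.centralBinom (n + 1) = 2 * Nat.choose (2 * n + 1) (n + 1) := by omega
    rw [cb, this]; push_cast; ring
  have h2 : HasSum (fun n : ℕ => (Nat.choose (2 * n + 1) (n + 1) : ℝ) * g ^ (n + 1))
      ((1 / Real.sqrt (1 - 4 * g) - 1) / 2) := by
    have := hshift.div_const 2
    have e : (fun n : ℕ => (Nat.choose (2 * n + 1) (n + 1) : ℝ) * g ^ (n + 1))
        = fun i : ℕ => cb (i + 1) * g ^ (i + 1) / 2 := by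
      funext n
      rw [hid n]; ring
    rw [e]; exact this
  have heq : (1 / Real.sqrt (1 - 4 * g) - 1) / 2
      = (1 - Real.sqrt (1 - 4 * g)) / (2 * Real.sqrt (1 - 4 * g)) := by
    rw [div_eq_div_iff (by norm_num) (by positivity)]
    field_simp
  rw [← heq]
  exact h2
end

section
/- For every real g ∈ (0, 1/4), there exists a continuous linear operator K on the Hilbert space ℓ²(ℕ, ℝ) of square-summable real sequences such that ⟨e_r, K e_s⟩ = (r+1)·C(r+s+1, r+1)·(√g)^{r+s+2} for all r, s ∈ ℕ (where (e_n) is the standard orthonormal basis), and the operator norm of K satisfies ‖K‖ ≤ g/(1−4g)^{3/2}. -/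
set_option maxHeartbeats 1000000
open scoped ENNReal
open Finset


open Finset

lemma aux_vander (n : ℕ) :
    ∑ p ∈ antidiagonal n, (n.choose p.1) ^ 2 = (2 * n).choose n := by
  rw [two_mul, Nat.add_choose_eq]
  refine Finset.sum_congr rfl fun p hp => ?_
  rw [Finset.HasAntidiagonal.mem_antidiagonal] at hp
  have h1 : p.1 ≤ n := by omega
  have h2 : p.2 = n - p.1 := by omega
  rw [h2, Nat.choose_symm h1, sq]

lemma aux_nat1 (r s : ℕ) :
    (r + 1) * (r + s + 1).choose (r + 1) = (r + s + 1) * (r + s).choose r := by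
  rw [mul_comm]
  simpa [Nat.succ_eq_add_one] using (Nat.add_one_mul_choose_eq (r + s) r).symm

lemma aux_diagsum (n : ℕ) :
    ∑ p ∈ antidiagonal n, ((p.1 + 1) * (n + 1).choose (p.1 + 1)) ^ 2
      = (n + 1) ^ 2 * (2 * n).choose n := by
  rw [← aux_vander n, Finset.mul_sum]
  refine Finset.sum_congr rfl fun p hp => ?_
  rw [Finset.HasAntidiagonal.mem_antidiagonal] at hp
  have : (p.1 + 1) * (n + 1).choose (p.1 + 1) = (n + 1) * n.choose p.1 := by
    have := aux_nat1 p.1 p.2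
    rw [hp] at this
    exact this
  rw [this, mul_pow]

lemma aux_central (n : ℕ) : 2 * ((n + 1) * (2 * n).choose n) ≤ (n + 2) * 4 ^ n := by
  rcases n with _ | m
  · simp
  set n := m + 1 with hn
  have hb : (2 * n).choose n * n = (2 * n).choose m * (n + 1) := by
    have := Nat.choose_succ_right_eq (2 * n) m
    have h2 : 2 * n - m = n + 1 := by omega
    rw [h2] at this
    simpa [hn] using this
  have hba : (2 * n).choose n ≤ 2 * (2 * n).choose m := by
    refine Nat.le_of_mul_le_mul_right ?_ (show 0 < n by omega)
    calc (2 * n).choose n * n = (2 * n).choose m * (n + 1) := hb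
      _ ≤ (2 * n).choose m * (2 * n) := Nat.mul_le_mul_left _ (by omega)
      _ = 2 * (2 * n).choose m * n := by ring
  have hc : (2 * n).choose (n + 1) = (2 * n).choose m := by
    have := Nat.choose_symm (show n + 1 ≤ 2 * n by omega)
    have h2 : 2 * n - (n + 1) = m := by omega
    rw [h2] at this
    exact this.symm
  have hsub : ({m, n, n + 1} : Finset ℕ) ⊆ Finset.range (2 * n + 1) := by
    intro k hk
    simp only [Finset.mem_insert, Finset.mem_singleton] at hk
    simp only [Finset.mem_range]
    omega
  have hsum : (2 * n).choose m + (2 * n).choose n + (2 * n).choose (n + 1) ≤ 4 ^ n := by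
    have h1 : ∑ k ∈ ({m, n, n + 1} : Finset ℕ), (2 * n).choose k
        ≤ ∑ k ∈ Finset.range (2 * n + 1), (2 * n).choose k :=
      Finset.sum_le_sum_of_subset hsub
    rw [Nat.sum_range_choose] at h1
    have h2 : ∑ k ∈ ({m, n, n + 1} : Finset ℕ), (2 * n).choose k
        = (2 * n).choose m + (2 * n).choose n + (2 * n).choose (n + 1) := by
      rw [Finset.sum_insert (by simp only [Finset.mem_insert, Finset.mem_singleton]; omega),
        Finset.sum_insert (by simp only [Finset.mem_singleton]; omega), Finset.sum_singleton]
      ring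
    have h3 : 2 ^ (2 * n) = 4 ^ n := by
      rw [pow_mul]; norm_num
    omega
  have h2C : 2 * (2 * n).choose n ≤ 4 ^ n := by
    calc 2 * (2 * n).choose n = (2 * n).choose n + (2 * n).choose n := by ring
    _ ≤ (2 * n).choose n + 2 * (2 * n).choose m := by omega
    _ = (2 * n).choose m + (2 * n).choose n + (2 * n).choose (n + 1) := by rw [hc]; ring
    _ ≤ 4 ^ n := hsum
  calc 2 * ((n + 1) * (2 * n).choose n) = (n + 1) * (2 * ((2 * n).choose n)) := by ring
  _ ≤ (n + 1) * 4 ^ n := Nat.mul_le_mul_left _ h2C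
  _ ≤ (n + 2) * 4 ^ n := Nat.mul_le_mul_right _ (by omega)

lemma aux_N1 (n : ℕ) : (n + 1) ^ 2 * (2 * n).choose n ≤ (n + 2).choose 2 * 4 ^ n := by
  have hch : (n + 2).choose 2 * 2 = (n + 2) * (n + 1) := by
    have := Nat.add_one_mul_choose_eq (n + 1) 1
    simpa [Nat.choose_one_right, mul_comm] using this.symm
  refine Nat.le_of_mul_le_mul_right ?_ (show 0 < 2 by norm_num)
  calc (n + 1) ^ 2 * (2 * n).choose n * 2
      = (n + 1) * (2 * ((n + 1) * (2 * n).choose n)) := by ring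
    _ ≤ (n + 1) * ((n + 2) * 4 ^ n) := Nat.mul_le_mul_left _ (aux_central n)
    _ = (n + 2) * (n + 1) * 4 ^ n := by ring
    _ = (n + 2).choose 2 * 2 * 4 ^ n := by rw [hch]
    _ = (n + 2).choose 2 * 4 ^ n * 2 := by ring

lemma aux_key (g : ℝ) (hg0 : 0 < g) (hg1 : g < 1/4) :
    Summable (fun p : ℕ × ℕ =>
      (((p.1 : ℝ) + 1) * ((p.1 + p.2 + 1).choose (p.1 + 1) : ℝ)
        * Real.sqrt g ^ (p.1 + p.2 + 2)) ^ 2) ∧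
    ∑' p : ℕ × ℕ, (((p.1 : ℝ) + 1) * ((p.1 + p.2 + 1).choose (p.1 + 1) : ℝ)
        * Real.sqrt g ^ (p.1 + p.2 + 2)) ^ 2 ≤ g ^ 2 / (1 - 4 * g) ^ 3 := by
  set F : ℕ × ℕ → ℝ := fun p =>
    (((p.1 : ℝ) + 1) * ((p.1 + p.2 + 1).choose (p.1 + 1) : ℝ)
      * Real.sqrt g ^ (p.1 + p.2 + 2)) ^ 2 with hFdef
  have hsq : Real.sqrt g ^ 2 = g := Real.sq_sqrt hg0.le
  have hFeq : ∀ p : ℕ × ℕ,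
      F p = (((p.1 + 1) * (p.1 + p.2 + 1).choose (p.1 + 1) : ℕ) : ℝ) * ((p.1 + 1) * (p.1 + p.2 + 1).choose (p.1 + 1) : ℕ) * g ^ (p.1 + p.2 + 2) := by
    intro p
    have : (Real.sqrt g ^ (p.1 + p.2 + 2)) ^ 2 = g ^ (p.1 + p.2 + 2) := by
      rw [← pow_mul, mul_comm, pow_mul, hsq]
    simp only [hFdef]
    push_cast
    rw [mul_pow, mul_pow, this]
    ring
  -- the diagonal sums
  have hfiber : ∀ n : ℕ, ∑ p ∈ antidiagonal n, F p
      = (((n + 1) ^ 2 * (2 * n).choose n : ℕ) : ℝ) * g ^ (n + 2) := by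
    intro n
    have : ∀ p ∈ antidiagonal n,
        F p = ((((p.1 + 1) * (n + 1).choose (p.1 + 1)) ^ 2 : ℕ) : ℝ) * g ^ (n + 2) := by
      intro p hp
      rw [Finset.HasAntidiagonal.mem_antidiagonal] at hp
      rw [hFeq p, hp]
      push_cast
      ring
    rw [Finset.sum_congr rfl this, ← Finset.sum_mul, ← Nat.cast_sum, aux_diagsum n]
  have h4g : ‖(4 * g : ℝ)‖ < 1 := by
    rw [Real.norm_eq_abs, abs_of_pos (by linarith)]
    linarith
  have hBsum : Summable (fun n : ℕ => (((n + 2).choose 2 : ℕ) : ℝ) * (4 * g) ^ n) :=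
    summable_choose_mul_geometric_of_norm_lt_one 2 h4g
  have hTle : ∀ n : ℕ, (((n + 1) ^ 2 * (2 * n).choose n : ℕ) : ℝ) * g ^ (n + 2)
      ≤ g ^ 2 * ((((n + 2).choose 2 : ℕ) : ℝ) * (4 * g) ^ n) := by
    intro n
    have hc : (((n + 1) ^ 2 * (2 * n).choose n : ℕ) : ℝ) ≤ (((n + 2).choose 2 * 4 ^ n : ℕ) : ℝ) :=
      Nat.cast_le.mpr (aux_N1 n)
    have hgn : (0 : ℝ) ≤ g ^ n := pow_nonneg hg0.le n
    calc (((n + 1) ^ 2 * (2 * n).choose n : ℕ) : ℝ) * g ^ (n + 2)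
        ≤ (((n + 2).choose 2 * 4 ^ n : ℕ) : ℝ) * g ^ (n + 2) := by
          apply mul_le_mul_of_nonneg_right hc (pow_nonneg hg0.le _)
      _ = g ^ 2 * ((((n + 2).choose 2 : ℕ) : ℝ) * (4 * g) ^ n) := by
          push_cast
          rw [mul_pow, pow_add]
          ring
  have hTnonneg : ∀ n : ℕ, (0 : ℝ) ≤ (((n + 1) ^ 2 * (2 * n).choose n : ℕ) : ℝ) * g ^ (n + 2) :=
    fun n => mul_nonneg (Nat.cast_nonneg _) (pow_nonneg hg0.le _)
  have hTsum : Summable (fun n : ℕ => (((n + 1) ^ 2 * (2 * n).choose n : ℕ) : ℝ) * g ^ (n + 2)) :=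
    Summable.of_nonneg_of_le hTnonneg hTle (hBsum.mul_left _)
  -- sigma reindexing
  have hfibS : ∀ n : ℕ, Summable (fun p : {x // x ∈ antidiagonal n} => F p.1) :=
    fun n => (hasSum_fintype _).summable
  have hfib' : ∀ n : ℕ, ∑' p : {x // x ∈ antidiagonal n}, F p.1
      = (((n + 1) ^ 2 * (2 * n).choose n : ℕ) : ℝ) * g ^ (n + 2) := by
    intro n
    rw [Finset.tsum_subtype (antidiagonal n) F, hfiber n]
  have hsigma : Summable (fun x : Σ n : ℕ, {p // p ∈ antidiagonal n} => F x.2.1) := by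
    apply (summable_sigma_of_nonneg (fun x => sq_nonneg _)).mpr
    refine ⟨hfibS, ?_⟩
    exact hTsum.congr fun n => (hfib' n).symm
  have hF : Summable F := by
    rw [← (Finset.HasAntidiagonal.sigmaAntidiagonalEquivProd (A := ℕ)).summable_iff (f := F)]
    exact hsigma
  refine ⟨hF, ?_⟩
  have htsum : ∑' p : ℕ × ℕ, F p = ∑' n : ℕ, (((n + 1) ^ 2 * (2 * n).choose n : ℕ) : ℝ) * g ^ (n + 2) := by
    rw [← (Finset.HasAntidiagonal.sigmaAntidiagonalEquivProd (A := ℕ)).tsum_eq F]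
    rw [show (fun x : Σ n : ℕ, {p // p ∈ antidiagonal n} =>
        F (Finset.HasAntidiagonal.sigmaAntidiagonalEquivProd x)) = fun x => F x.2.1 from rfl]
    rw [Summable.tsum_sigma' hfibS hsigma]
    exact tsum_congr hfib'
  rw [htsum]
  calc ∑' n : ℕ, (((n + 1) ^ 2 * (2 * n).choose n : ℕ) : ℝ) * g ^ (n + 2)
      ≤ ∑' n : ℕ, g ^ 2 * ((((n + 2).choose 2 : ℕ) : ℝ) * (4 * g) ^ n) :=
        Summable.tsum_le_tsum hTle hTsum (hBsum.mul_left _)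
    _ = g ^ 2 * (1 / (1 - 4 * g) ^ 3) := by
        rw [tsum_mul_left, tsum_choose_mul_geometric_of_norm_lt_one 2 h4g]
    _ = g ^ 2 / (1 - 4 * g) ^ 3 := by ring


/-- For `g ∈ (0,1/4)` there is a continuous linear operator `K` on `ℓ²(ℕ,ℝ)`
with matrix entries `⟨e_r, K e_s⟩ = (r+1)·C(r+s+1, r+1)·(√g)^{r+s+2}` and
operator norm at most `g/(1-4g)^{3/2}`. -/
theorem stmt_15 (g : ℝ) (hg0 : 0 < g) (hg1 : g < 1/4) :
    ∃ K : lp (fun _ : ℕ => ℝ) 2 →L[ℝ] lp (fun _ : ℕ => ℝ) 2,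
      (∀ r s : ℕ,
        (inner ℝ (lp.single 2 r (1 : ℝ)) (K (lp.single 2 s (1 : ℝ))) : ℝ)
          = ((r : ℝ) + 1) * (Nat.choose (r + s + 1) (r + 1) : ℝ)
              * Real.sqrt g ^ (r + s + 2)) ∧
      ‖K‖ ≤ g / (1 - 4 * g) ^ ((3 : ℝ) / 2) := by
  classical
  have hg4 : 0 < 1 - 4 * g := by linarith
  set C : ℝ := g / (1 - 4 * g) ^ ((3 : ℝ) / 2) with hCdef
  have hCpos : 0 < C := div_pos hg0 (Real.rpow_pos_of_pos hg4 _)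
  have hC2 : C ^ 2 = g ^ 2 / (1 - 4 * g) ^ 3 := by
    rw [hCdef, div_pow, ← Real.rpow_natCast ((1 - 4 * g) ^ ((3 : ℝ) / 2)) 2,
      ← Real.rpow_mul hg4.le]
    norm_num
  obtain ⟨hF, hFle⟩ := aux_key g hg0 hg1
  set M : ℕ → ℕ → ℝ := fun r s =>
    ((r : ℝ) + 1) * ((r + s + 1).choose (r + 1) : ℝ) * Real.sqrt g ^ (r + s + 2) with hMdef
  have hFnn : (0 : ℕ × ℕ → ℝ) ≤ fun p => M p.1 p.2 ^ 2 := fun p => sq_nonneg _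
  have hprod := (summable_prod_of_nonneg hFnn).mp hF
  have hrow : ∀ r, Summable fun s => M r s ^ 2 := hprod.1
  set w : ℕ → ℝ := fun r => ∑' s, M r s ^ 2 with hwdef
  have hw_sum : Summable w := hprod.2
  have hw_nn : ∀ r, 0 ≤ w r := fun r => tsum_nonneg fun s => sq_nonneg _
  have htot : ∑' r, w r ≤ C ^ 2 := by
    rw [hC2, ← Summable.tsum_prod' hF hrow]
    exact hFle
  -- exponent conversion
  have htwo : ∀ a : ℝ, ‖a‖ ^ ((2 : ℝ≥0∞)).toReal = a ^ 2 := by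
    intro a
    rw [show ((2 : ℝ≥0∞)).toReal = ((2 : ℕ) : ℝ) by norm_num, Real.rpow_natCast,
      Real.norm_eq_abs, sq_abs]
  have htwopos : (0 : ℝ) < ((2 : ℝ≥0∞)).toReal := by norm_num
  -- rows as lp elements
  have hmemrow : ∀ r, Memℓp (fun s => M r s) 2 := by
    intro r
    apply memℓp_gen
    simp only [htwo]
    exact hrow r
  set R : ℕ → lp (fun _ : ℕ => ℝ) 2 := fun r => ⟨fun s => M r s, hmemrow r⟩ with hRdef
  have hRnorm : ∀ r, ‖R r‖ ^ 2 = w r := by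
    intro r
    have h := lp.norm_rpow_eq_tsum (p := 2) htwopos (R r)
    simp only [htwo] at h
    rw [show ‖R r‖ ^ ((2 : ℝ≥0∞)).toReal = ‖R r‖ ^ 2 from by
      rw [show ((2 : ℝ≥0∞)).toReal = ((2 : ℕ) : ℝ) by norm_num, Real.rpow_natCast]] at h
    exact h
  -- the candidate image values
  have hTle : ∀ (f : lp (fun _ : ℕ => ℝ) 2) (r : ℕ),
      (inner ℝ (R r) f : ℝ) ^ 2 ≤ w r * ‖f‖ ^ 2 := by
    intro f r
    have h1 : ‖(inner ℝ (R r) f : ℝ)‖ ≤ ‖R r‖ * ‖f‖ := norm_inner_le_norm _ _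
    have h2 : ‖(inner ℝ (R r) f : ℝ)‖ ^ 2 ≤ (‖R r‖ * ‖f‖) ^ 2 :=
      pow_le_pow_left₀ (norm_nonneg _) h1 2
    rw [Real.norm_eq_abs, sq_abs] at h2
    calc (inner ℝ (R r) f : ℝ) ^ 2 ≤ (‖R r‖ * ‖f‖) ^ 2 := h2
      _ = w r * ‖f‖ ^ 2 := by rw [mul_pow, hRnorm]
  have hmemT : ∀ f : lp (fun _ : ℕ => ℝ) 2,
      Memℓp (fun r => (inner ℝ (R r) f : ℝ)) 2 := by
    intro f
    apply memℓp_gen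
    simp only [htwo]
    exact Summable.of_nonneg_of_le (fun r => sq_nonneg _) (fun r => hTle f r)
      (hw_sum.mul_right (‖f‖ ^ 2))
  set Klin : lp (fun _ : ℕ => ℝ) 2 →ₗ[ℝ] lp (fun _ : ℕ => ℝ) 2 :=
    { toFun := fun f => ⟨fun r => (inner ℝ (R r) f : ℝ), hmemT f⟩
      map_add' := fun f h => by
        apply lp.ext
        rw [lp.coeFn_add]
        funext r
        exact inner_add_right _ _ _
      map_smul' := fun c f => by
        apply lp.ext
        rw [lp.coeFn_smul]
        funext r
        exact real_inner_smul_right _ _ _ } with hKlin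
  have hKapp : ∀ (f : lp (fun _ : ℕ => ℝ) 2) (r : ℕ), (Klin f) r = (inner ℝ (R r) f : ℝ) :=
    fun f r => rfl
  have hbound : ∀ f, ‖Klin f‖ ≤ C * ‖f‖ := by
    intro f
    have hn2 : ‖Klin f‖ ^ 2 = ∑' r, (inner ℝ (R r) f : ℝ) ^ 2 := by
      have h := lp.norm_rpow_eq_tsum (p := 2) htwopos (Klin f)
      simp only [htwo] at h
      rw [show ‖Klin f‖ ^ ((2 : ℝ≥0∞)).toReal = ‖Klin f‖ ^ 2 from by
        rw [show ((2 : ℝ≥0∞)).toReal = ((2 : ℕ) : ℝ) by norm_num, Real.rpow_natCast]] at h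
      simpa only [hKapp] using h
    have hle2 : ‖Klin f‖ ^ 2 ≤ (C * ‖f‖) ^ 2 := by
      rw [hn2, mul_pow]
      calc ∑' r, (inner ℝ (R r) f : ℝ) ^ 2 ≤ ∑' r, w r * ‖f‖ ^ 2 :=
          Summable.tsum_le_tsum (fun r => hTle f r)
            (Summable.of_nonneg_of_le (fun r => sq_nonneg _) (fun r => hTle f r)
              (hw_sum.mul_right (‖f‖ ^ 2)))
            (hw_sum.mul_right (‖f‖ ^ 2))
        _ = (∑' r, w r) * ‖f‖ ^ 2 := tsum_mul_right
        _ ≤ C ^ 2 * ‖f‖ ^ 2 := mul_le_mul_of_nonneg_right htot (sq_nonneg _)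
    exact le_of_pow_le_pow_left₀ two_ne_zero (by positivity) hle2
  refine ⟨Klin.mkContinuous C hbound, ?_, LinearMap.mkContinuous_norm_le _ hCpos.le _⟩
  intro r s
  rw [LinearMap.mkContinuous_apply]
  rw [lp.inner_single_left]
  have h1 : (Klin (lp.single 2 s (1 : ℝ))) r = (inner ℝ (R r) (lp.single 2 s (1 : ℝ)) : ℝ) := rfl
  have h2 : (inner ℝ (R r) (lp.single 2 s (1 : ℝ)) : ℝ) = M r s := by
    rw [lp.inner_single_right]
    simp [RCLike.inner_apply]
    rfl
  simp only [RCLike.inner_apply, starRingEnd_apply, star_one, one_mul]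
  rw [h1, h2]
  exact mul_one _
end

section
/- For every real g ∈ (0, 1/4) and every integer m ≥ 1, the inequality W_m(g) ≤ ∑_{(l₁,…,l_m)} ∏_{k=1}^m T_{l_k, l_{k+1}}(g) holds, where the sum runs over all m-tuples (l₁,…,l_m) of positive integers with the cyclic convention l_{m+1} := l₁, T_{r,s}(g) := C(r+s−1, r)·(√g)^{r+s}, and the possibly infinite sum on the right is taken in the extended nonnegative reals [0, ∞]. -/
/-- Pure CDT transfer matrix elements `T_{r,s}(g) = C(r+s-1, r)·(√g)^{r+s}` for `r, s ≥ 1`. -/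
noncomputable def Tmat (g : ℝ) (r s : ℕ+) : ℝ :=
  (Nat.choose ((r : ℕ) + (s : ℕ) - 1) (r : ℕ) : ℝ) * Real.sqrt g ^ ((r : ℕ) + (s : ℕ))

section X
variable {g : ℝ}

lemma Xseq_bounds (hg0 : 0 < g) (hg1 : g < 1/4) (n : ℕ) :
    1 ≤ Xseq g n ∧ Xseq g n < 2 := by
  induction n with
  | zero => constructor <;> norm_num [Xseq]
  | succ n ih =>
    obtain ⟨h1, h2⟩ := ih
    have hx : g * Xseq g n < 1/2 := by nlinarith
    have hx0 : 0 < g * Xseq g n := by nlinarith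
    refine ⟨?_, ?_⟩
    · rw [show Xseq g (n+1) = 1 / (1 - g * Xseq g n) from rfl, le_div_iff₀ (by linarith)]
      linarith
    · rw [show Xseq g (n+1) = 1 / (1 - g * Xseq g n) from rfl, div_lt_iff₀ (by linarith)]
      linarith

lemma gX_lt_half (hg0 : 0 < g) (hg1 : g < 1/4) (n : ℕ) : g * Xseq g n < 1/2 := by
  obtain ⟨h1, h2⟩ := Xseq_bounds hg0 hg1 n; nlinarith

lemma gX_pos (hg0 : 0 < g) (hg1 : g < 1/4) (n : ℕ) : 0 < g * Xseq g n := by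
  obtain ⟨h1, h2⟩ := Xseq_bounds hg0 hg1 n; nlinarith

lemma one_sub_gX_pos (hg0 : 0 < g) (hg1 : g < 1/4) (n : ℕ) : 0 < 1 - g * Xseq g n := by
  have := gX_lt_half hg0 hg1 n; linarith

lemma Xseq_pos (hg0 : 0 < g) (hg1 : g < 1/4) (n : ℕ) : 0 < Xseq g n := by
  have := (Xseq_bounds hg0 hg1 n).1; linarith

lemma Xmul (hg0 : 0 < g) (hg1 : g < 1/4) (n : ℕ) :
    Xseq g (n+1) * (1 - g * Xseq g n) = 1 := by
  have h := one_sub_gX_pos hg0 hg1 n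
  rw [show Xseq g (n+1) = 1 / (1 - g * Xseq g n) from rfl]
  field_simp

lemma Wseq_eq (hg0 : 0 < g) (hg1 : g < 1/4) (n : ℕ) :
    Wseq g (n+1) = g ^ (n+1) * ∏ j ∈ Finset.range (n+1), (Xseq g j * Xseq g (j+1)) := by
  induction n with
  | zero =>
    have hA := Xmul hg0 hg1 0
    simp only [Wseq, zero_add, pow_one, Finset.prod_range_one, show Xseq g 0 = 1 from rfl] at hA ⊢
    linear_combination hA
  | succ n ih =>
    have hA := Xmul hg0 hg1 n
    have hB := Xmul hg0 hg1 (n+1)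
    have key : Wseq g (n+2) = g * Xseq g (n+1) * Xseq g (n+2) * Wseq g (n+1) := by
      show Xseq g (n+2) - Xseq g (n+1)
          = g * Xseq g (n+1) * Xseq g (n+2) * (Xseq g (n+1) - Xseq g n)
      linear_combination Xseq g (n+1) * hB - Xseq g (n+2) * hA
    rw [key, ih, Finset.prod_range_succ (f := fun j => Xseq g j * Xseq g (j+1)) (n := n+1)]
    ring

end X

open scoped ENNReal

section NB

lemma choose_le_two_pow' (n k : ℕ) : n.choose k ≤ 2 ^ n := by
  rcases le_or_gt k n with h | h
  · calc n.choose k ≤ ∑ i ∈ Finset.range (n+1), n.choose i :=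
        Finset.single_le_sum (fun i _ => Nat.zero_le _) (Finset.mem_range.2 (by omega))
    _ = 2 ^ n := Nat.sum_range_choose n
  · rw [Nat.choose_eq_zero_of_lt h]; exact Nat.zero_le _

lemma nb_ne_top {x : ℝ≥0∞} (hx : 2 * x < 1) (r : ℕ) :
    ∑' j : ℕ, (Nat.choose (r + j) j : ℝ≥0∞) * x ^ j ≠ ⊤ := by
  have hb : ∑' j : ℕ, (Nat.choose (r + j) j : ℝ≥0∞) * x ^ j
      ≤ ∑' j : ℕ, 2 ^ r * (2 * x) ^ j := by
    refine ENNReal.tsum_le_tsum fun j => ?_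
    have h1 : ((Nat.choose (r + j) j : ℕ) : ℝ≥0∞) ≤ (2 ^ (r + j) : ℕ) := by
      exact_mod_cast Nat.cast_le.2 (choose_le_two_pow' (r+j) j)
    calc (Nat.choose (r + j) j : ℝ≥0∞) * x ^ j ≤ (2 ^ (r+j) : ℕ) * x ^ j :=
          mul_le_mul_left h1 _
      _ = 2 ^ r * (2 * x) ^ j := by
          push_cast
          rw [mul_pow, pow_add]
          ring
  refine ne_top_of_le_ne_top ?_ hb
  rw [ENNReal.tsum_mul_left, ENNReal.tsum_geometric]
  refine ENNReal.mul_ne_top (by simp) (ENNReal.inv_ne_top.2 ?_)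
  simp only [ne_eq, tsub_eq_zero_iff_le, not_le]
  exact hx

lemma nb_sum {x : ℝ≥0∞} (hx : 2 * x < 1) :
    ∀ r : ℕ, ∑' j : ℕ, (Nat.choose (r + j) j : ℝ≥0∞) * x ^ j = ((1 - x)⁻¹) ^ (r + 1) := by
  have hx1 : x < 1 := lt_of_le_of_lt (by
    calc x = 1 * x := (one_mul x).symm
    _ ≤ 2 * x := mul_le_mul_left (by norm_num) x) hx
  have hsub0 : (1 : ℝ≥0∞) - x ≠ 0 := by
    simp only [ne_eq, tsub_eq_zero_iff_le, not_le]; exact hx1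
  have hsubt : (1 : ℝ≥0∞) - x ≠ ⊤ := by
    exact ne_top_of_le_ne_top ENNReal.one_ne_top tsub_le_self
  intro r
  induction r with
  | zero => simp [ENNReal.tsum_geometric]
  | succ r ih =>
    have hterm : ∀ j : ℕ,
        (Nat.choose (r + 1 + (j + 1)) (j + 1) : ℝ≥0∞) * x ^ (j + 1)
          = x * ((Nat.choose (r + 1 + j) j : ℝ≥0∞) * x ^ j)
            + (Nat.choose (r + (j + 1)) (j + 1) : ℝ≥0∞) * x ^ (j + 1) := by
      intro j
      have hpascal : (r + 1 + (j + 1)).choose (j + 1)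
          = (r + 1 + j).choose j + (r + (j + 1)).choose (j + 1) := by
        rw [show r + 1 + (j + 1) = (r + 1 + j) + 1 from by ring,
          show r + (j + 1) = r + 1 + j from by ring]
        exact Nat.choose_succ_succ _ _
      rw [hpascal]
      push_cast
      ring
    have hPt : (∑' j : ℕ, (Nat.choose (r + 1 + j) j : ℝ≥0∞) * x ^ j) ≠ ⊤ :=
      nb_ne_top hx (r + 1)
    have h1 : (∑' j : ℕ, (Nat.choose (r + 1 + j) j : ℝ≥0∞) * x ^ j)
        = 1 + (x * (∑' j : ℕ, (Nat.choose (r + 1 + j) j : ℝ≥0∞) * x ^ j)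
            + ∑' j : ℕ, (Nat.choose (r + (j + 1)) (j + 1) : ℝ≥0∞) * x ^ (j + 1)) := by
      conv_lhs => rw [tsum_eq_zero_add' ENNReal.summable]
      rw [tsum_congr hterm, ENNReal.tsum_add, ENNReal.tsum_mul_left]
      simp
    have h3 : 1 + (∑' j : ℕ, (Nat.choose (r + (j + 1)) (j + 1) : ℝ≥0∞) * x ^ (j + 1))
        = ((1 - x)⁻¹) ^ (r + 1) := by
      rw [← ih]
      conv_rhs => rw [tsum_eq_zero_add' ENNReal.summable]
      simp
    have key : (∑' j : ℕ, (Nat.choose (r + 1 + j) j : ℝ≥0∞) * x ^ j)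
        = ((1 - x)⁻¹) ^ (r + 1)
          + x * (∑' j : ℕ, (Nat.choose (r + 1 + j) j : ℝ≥0∞) * x ^ j) :=
      calc (∑' j : ℕ, (Nat.choose (r + 1 + j) j : ℝ≥0∞) * x ^ j)
          = 1 + (x * (∑' j : ℕ, (Nat.choose (r + 1 + j) j : ℝ≥0∞) * x ^ j)
            + ∑' j : ℕ, (Nat.choose (r + (j + 1)) (j + 1) : ℝ≥0∞) * x ^ (j + 1)) := h1
        _ = (1 + (∑' j : ℕ, (Nat.choose (r + (j + 1)) (j + 1) : ℝ≥0∞) * x ^ (j + 1)))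
            + x * (∑' j : ℕ, (Nat.choose (r + 1 + j) j : ℝ≥0∞) * x ^ j) := by ring
        _ = ((1 - x)⁻¹) ^ (r + 1)
            + x * (∑' j : ℕ, (Nat.choose (r + 1 + j) j : ℝ≥0∞) * x ^ j) := by rw [h3]
    have hxP : x * (∑' j : ℕ, (Nat.choose (r + 1 + j) j : ℝ≥0∞) * x ^ j) ≠ ⊤ :=
      ENNReal.mul_ne_top hx1.ne_top hPt
    have hsolve : (1 - x) * (∑' j : ℕ, (Nat.choose (r + 1 + j) j : ℝ≥0∞) * x ^ j)
        = ((1 - x)⁻¹) ^ (r + 1) := by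
      rw [ENNReal.sub_mul (fun _ _ => hPt), one_mul]
      exact ENNReal.sub_eq_of_eq_add hxP key
    have hfin := (ENNReal.eq_div_iff hsub0 hsubt).2 hsolve
    rw [hfin, div_eq_mul_inv, ← pow_succ]

end NB

section Step
variable {g : ℝ}

lemma ofReal_Tmat (g : ℝ) (r s : ℕ+) :
    ENNReal.ofReal (Tmat g r s)
      = (Nat.choose ((r : ℕ) + (s : ℕ) - 1) (r : ℕ) : ℝ≥0∞)
        * (ENNReal.ofReal (Real.sqrt g)) ^ ((r : ℕ) + (s : ℕ)) := by
  rw [Tmat, ENNReal.ofReal_mul (by positivity), ENNReal.ofReal_pow (Real.sqrt_nonneg g),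
    ENNReal.ofReal_natCast]

lemma ofReal_X_succ (hg0 : 0 < g) (hg1 : g < 1/4) (n : ℕ) :
    (1 - ENNReal.ofReal (g * Xseq g n))⁻¹ = ENNReal.ofReal (Xseq g (n+1)) := by
  have h := one_sub_gX_pos hg0 hg1 n
  rw [← ENNReal.ofReal_one, ← ENNReal.ofReal_sub _ (gX_pos hg0 hg1 n).le,
    ← ENNReal.ofReal_inv_of_pos h]
  congr 1
  rw [show Xseq g (n+1) = 1 / (1 - g * Xseq g n) from rfl, one_div]

lemma qA_eq (hg0 : 0 < g) (n : ℕ) :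
    ENNReal.ofReal (Real.sqrt g) * ENNReal.ofReal (Real.sqrt g * Xseq g n)
      = ENNReal.ofReal (g * Xseq g n) := by
  rw [← ENNReal.ofReal_mul (Real.sqrt_nonneg g)]
  congr 1
  rw [← mul_assoc, Real.mul_self_sqrt hg0.le]

lemma two_qA_lt_one (hg0 : 0 < g) (hg1 : g < 1/4) (n : ℕ) :
    2 * ENNReal.ofReal (g * Xseq g n) < 1 := by
  have h := gX_lt_half hg0 hg1 n
  rw [show (2:ℝ≥0∞) = ENNReal.ofReal 2 from by norm_num,
    ← ENNReal.ofReal_mul (by norm_num)]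
  rw [ENNReal.ofReal_lt_one]
  linarith

lemma step_sum (hg0 : 0 < g) (hg1 : g < 1/4) (n : ℕ) (r : ℕ+) :
    ∑' s : ℕ+, ENNReal.ofReal (Tmat g r s)
        * ENNReal.ofReal (Real.sqrt g * Xseq g n) ^ ((s : ℕ))
      = ENNReal.ofReal (g * Xseq g n * Xseq g (n+1))
        * ENNReal.ofReal (Real.sqrt g * Xseq g (n+1)) ^ ((r : ℕ)) := by
  set q := ENNReal.ofReal (Real.sqrt g) with hq
  set A := ENNReal.ofReal (Real.sqrt g * Xseq g n) with hA
  have key : ∀ j : ℕ,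
      ENNReal.ofReal (Tmat g r (j.succPNat)) * A ^ ((j.succPNat : ℕ))
        = (q ^ ((r:ℕ) + 1) * A) * ((Nat.choose ((r:ℕ) + j) j : ℝ≥0∞) * (q * A) ^ j) := by
    intro j
    rw [ofReal_Tmat, Nat.succPNat_coe,
      show (r:ℕ) + (j+1) - 1 = (r:ℕ) + j from by omega,
      Nat.choose_symm_add]
    rw [pow_add, pow_succ, mul_pow, pow_succ]
    ring
  rw [← Equiv.tsum_eq Equiv.pnatEquivNat.symm]
  simp only [Equiv.pnatEquivNat_symm_apply]
  rw [tsum_congr key, ENNReal.tsum_mul_left, nb_sum (by rw [qA_eq hg0 n]; exact two_qA_lt_one hg0 hg1 n),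
    qA_eq hg0 n, ofReal_X_succ hg0 hg1 n]
  have hB : q * ENNReal.ofReal (Xseq g (n+1)) = ENNReal.ofReal (Real.sqrt g * Xseq g (n+1)) := by
    rw [hq, ← ENNReal.ofReal_mul (Real.sqrt_nonneg g)]
  have hBA : ENNReal.ofReal (Real.sqrt g * Xseq g (n+1)) * A
      = ENNReal.ofReal (g * Xseq g n * Xseq g (n+1)) := by
    rw [hA, ← ENNReal.ofReal_mul
      (mul_nonneg (Real.sqrt_nonneg g) (Xseq_pos hg0 hg1 (n+1)).le)]
    congr 1
    have hgg : Real.sqrt g * Real.sqrt g = g := Real.mul_self_sqrt hg0.le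
    linear_combination (Xseq g n * Xseq g (n+1)) * hgg
  calc q ^ ((r:ℕ) + 1) * A * ENNReal.ofReal (Xseq g (n+1)) ^ ((r:ℕ) + 1)
      = (q * ENNReal.ofReal (Xseq g (n+1))) ^ ((r:ℕ) + 1) * A := by
        rw [mul_pow]; ring
    _ = ENNReal.ofReal (Real.sqrt g * Xseq g (n+1)) ^ ((r:ℕ) + 1) * A := by rw [hB]
    _ = ENNReal.ofReal (g * Xseq g n * Xseq g (n+1))
          * ENNReal.ofReal (Real.sqrt g * Xseq g (n+1)) ^ ((r:ℕ)) := by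
        rw [pow_succ]
        rw [mul_assoc, hBA]
        ring

end Step

section Chain
variable {g : ℝ}

def consPNatEquiv (n : ℕ) : ℕ+ × (Fin n → ℕ+) ≃ (Fin (n+1) → ℕ+) where
  toFun p := Fin.cons p.1 p.2
  invFun l := (l 0, Fin.tail l)
  left_inv p := by simp [Fin.tail_cons]
  right_inv l := Fin.cons_self_tail l

@[simp] lemma consPNatEquiv_apply (n : ℕ) (p : ℕ+ × (Fin n → ℕ+)) :
    consPNatEquiv n p = Fin.cons p.1 p.2 := rfl

lemma chain_sum (hg0 : 0 < g) (hg1 : g < 1/4) : ∀ n : ℕ, ∀ r : ℕ+,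
    (∑' l : Fin n → ℕ+,
      (∏ k : Fin n,
        ENNReal.ofReal (Tmat g ((Fin.cons r l : Fin (n+1) → ℕ+) k.castSucc)
          ((Fin.cons r l : Fin (n+1) → ℕ+) k.succ)))
        * ENNReal.ofReal (Real.sqrt g)
            ^ (((Fin.cons r l : Fin (n+1) → ℕ+) (Fin.last n) : ℕ+) : ℕ))
      = ENNReal.ofReal (g ^ n * ∏ j ∈ Finset.range n, (Xseq g j * Xseq g (j+1)))
        * ENNReal.ofReal (Real.sqrt g * Xseq g n) ^ ((r : ℕ)) := by
  intro n
  induction n with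
  | zero =>
    intro r
    rw [tsum_eq_single (default : Fin 0 → ℕ+)
      (fun b hb => absurd (Subsingleton.elim b default) hb)]
    simp [show Fin.last 0 = 0 from rfl, Fin.cons_zero, show Xseq g 0 = 1 from rfl]
  | succ n ih =>
    intro r
    rw [← Equiv.tsum_eq (consPNatEquiv n), ENNReal.tsum_prod']
    have hinner : ∀ (s : ℕ+) (l' : Fin n → ℕ+),
        (∏ k : Fin (n+1),
          ENNReal.ofReal (Tmat g ((Fin.cons r (Fin.cons s l') : Fin (n+2) → ℕ+) k.castSucc)
            ((Fin.cons r (Fin.cons s l') : Fin (n+2) → ℕ+) k.succ)))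
          * ENNReal.ofReal (Real.sqrt g)
              ^ (((Fin.cons r (Fin.cons s l') : Fin (n+2) → ℕ+) (Fin.last (n+1)) : ℕ+) : ℕ)
        = ENNReal.ofReal (Tmat g r s)
          * ((∏ k : Fin n,
              ENNReal.ofReal (Tmat g ((Fin.cons s l' : Fin (n+1) → ℕ+) k.castSucc) ((Fin.cons s l' : Fin (n+1) → ℕ+) k.succ)))
            * ENNReal.ofReal (Real.sqrt g) ^ (((Fin.cons s l' : Fin (n+1) → ℕ+) (Fin.last n) : ℕ+) : ℕ)) := by
      intro s l'
      have hlast : (Fin.cons r (Fin.cons s l') : Fin (n+2) → ℕ+) (Fin.last (n+1))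
          = (Fin.cons s l' : Fin (n+1) → ℕ+) (Fin.last n) := by
        rw [← Fin.succ_last, Fin.cons_succ]
      have hprod : (∏ k : Fin (n+1),
          ENNReal.ofReal (Tmat g ((Fin.cons r (Fin.cons s l') : Fin (n+2) → ℕ+) k.castSucc)
            ((Fin.cons r (Fin.cons s l') : Fin (n+2) → ℕ+) k.succ)))
          = ENNReal.ofReal (Tmat g r s)
            * ∏ k : Fin n,
                ENNReal.ofReal (Tmat g ((Fin.cons s l' : Fin (n+1) → ℕ+) k.castSucc) ((Fin.cons s l' : Fin (n+1) → ℕ+) k.succ)) := by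
        rw [Fin.prod_univ_succ]
        congr 1
      rw [hlast, hprod, mul_assoc]
    calc ∑' (s : ℕ+) (l' : Fin n → ℕ+),
          (∏ k : Fin (n+1),
            ENNReal.ofReal (Tmat g ((Fin.cons r (Fin.cons s l') : Fin (n+2) → ℕ+) k.castSucc)
              ((Fin.cons r (Fin.cons s l') : Fin (n+2) → ℕ+) k.succ)))
            * ENNReal.ofReal (Real.sqrt g)
                ^ (((Fin.cons r (Fin.cons s l') : Fin (n+2) → ℕ+) (Fin.last (n+1)) : ℕ+) : ℕ)
        = ∑' (s : ℕ+), ENNReal.ofReal (Tmat g r s)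
            * (ENNReal.ofReal (g ^ n * ∏ j ∈ Finset.range n, (Xseq g j * Xseq g (j+1)))
              * ENNReal.ofReal (Real.sqrt g * Xseq g n) ^ ((s : ℕ))) := by
          refine tsum_congr fun s => ?_
          rw [tsum_congr (hinner s), ENNReal.tsum_mul_left, ih s]
      _ = ENNReal.ofReal (g ^ n * ∏ j ∈ Finset.range n, (Xseq g j * Xseq g (j+1)))
            * ∑' (s : ℕ+), ENNReal.ofReal (Tmat g r s)
              * ENNReal.ofReal (Real.sqrt g * Xseq g n) ^ ((s : ℕ)) := by
          rw [← ENNReal.tsum_mul_left]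
          refine tsum_congr fun s => by ring
      _ = ENNReal.ofReal (g ^ (n+1) * ∏ j ∈ Finset.range (n+1), (Xseq g j * Xseq g (j+1)))
            * ENNReal.ofReal (Real.sqrt g * Xseq g (n+1)) ^ ((r : ℕ)) := by
          rw [step_sum hg0 hg1 n r, ← mul_assoc,
            ← ENNReal.ofReal_mul (by
              refine mul_nonneg (pow_nonneg hg0.le n) (Finset.prod_nonneg fun j _ =>
                mul_nonneg (Xseq_pos hg0 hg1 j).le (Xseq_pos hg0 hg1 (j+1)).le)),
            Finset.prod_range_succ]
          congr 2
          ring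

end Chain


/-- For `g ∈ (0,1/4)` and `m ≥ 1`,
`W_m(g) ≤ ∑_{(l₁,…,l_m)} ∏_{k=1}^m T_{l_k, l_{k+1}}(g)` (cyclically, `l_{m+1} = l₁`),
the right-hand side being a possibly infinite sum in `[0,∞]`. -/
theorem stmt_17 (g : ℝ) (hg0 : 0 < g) (hg1 : g < 1/4) (m : ℕ) (hm : 1 ≤ m) :
    ENNReal.ofReal (Wseq g m)
      ≤ ∑' l : Fin m → ℕ+, ∏ k : Fin m, ENNReal.ofReal (Tmat g (l k) (l (finRotate m k))) := by
  obtain ⟨n, rfl⟩ : ∃ n, m = n + 1 := ⟨m - 1, by omega⟩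
  set q := ENNReal.ofReal (Real.sqrt g) with hq
  have hterm : ∀ l : Fin (n+1) → ℕ+,
      (∏ j : Fin n, ENNReal.ofReal (Tmat g (l j.castSucc) (l j.succ)))
          * (q ^ ((l (Fin.last n) : ℕ)) * q ^ ((l 0 : ℕ)))
        ≤ ∏ k : Fin (n+1), ENNReal.ofReal (Tmat g (l k) (l (finRotate (n+1) k))) := by
    intro l
    rw [Fin.prod_univ_castSucc
      (f := fun k => ENNReal.ofReal (Tmat g (l k) (l (finRotate (n+1) k))))]
    refine mul_le_mul' (le_of_eq (Finset.prod_congr rfl fun j _ => ?_)) ?_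
    · rw [finRotate_succ_apply, Fin.coeSucc_eq_succ]
    · rw [finRotate_last, ofReal_Tmat]
      have hchoose : ∀ a b : ℕ+, (1:ℝ≥0∞) ≤
          (Nat.choose ((a : ℕ) + (b : ℕ) - 1) (a : ℕ) : ℝ≥0∞) := by
        intro a b
        rw [Nat.one_le_cast]
        refine Nat.one_le_iff_ne_zero.2 (Nat.pos_iff_ne_zero.1 (Nat.choose_pos ?_))
        have h1 : 0 < (b : ℕ) := b.2
        omega
      have hchoose := hchoose (l (Fin.last n)) (l 0)
      calc q ^ ((l (Fin.last n) : ℕ)) * q ^ ((l 0 : ℕ))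
          = q ^ (((l (Fin.last n)) : ℕ) + ((l 0 : ℕ))) := (pow_add q _ _).symm
        _ ≤ _ := le_mul_of_one_le_left zero_le hchoose
  refine le_trans (le_of_eq ?_) (ENNReal.tsum_le_tsum hterm)
  rw [← Equiv.tsum_eq (consPNatEquiv n), ENNReal.tsum_prod']
  simp only [consPNatEquiv_apply]
  symm
  have hXp := Xseq_pos hg0 hg1
  have hc : 0 ≤ g ^ n * ∏ j ∈ Finset.range n, (Xseq g j * Xseq g (j+1)) :=
    mul_nonneg (pow_nonneg hg0.le n)
      (Finset.prod_nonneg fun j _ => mul_nonneg (hXp j).le (hXp (j+1)).le)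
  calc ∑' (s : ℕ+) (l' : Fin n → ℕ+),
        (∏ j : Fin n,
          ENNReal.ofReal (Tmat g ((Fin.cons s l' : Fin (n+1) → ℕ+) j.castSucc)
            ((Fin.cons s l' : Fin (n+1) → ℕ+) j.succ)))
          * (q ^ (((Fin.cons s l' : Fin (n+1) → ℕ+) (Fin.last n) : ℕ+) : ℕ)
            * q ^ (((Fin.cons s l' : Fin (n+1) → ℕ+) 0 : ℕ+) : ℕ))
      = ∑' (s : ℕ+),
          (ENNReal.ofReal (g ^ n * ∏ j ∈ Finset.range n, (Xseq g j * Xseq g (j+1)))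
            * ENNReal.ofReal (Real.sqrt g * Xseq g n) ^ ((s : ℕ))) * q ^ ((s : ℕ)) := by
        refine tsum_congr fun s => ?_
        rw [← chain_sum hg0 hg1 n s, ← ENNReal.tsum_mul_right]
        refine tsum_congr fun l' => ?_
        rw [Fin.cons_zero]
        ring
    _ = ENNReal.ofReal (g ^ n * ∏ j ∈ Finset.range n, (Xseq g j * Xseq g (j+1)))
          * ∑' (s : ℕ+), (ENNReal.ofReal (g * Xseq g n)) ^ ((s : ℕ)) := by
        rw [← ENNReal.tsum_mul_left]
        refine tsum_congr fun s => ?_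
        rw [← qA_eq hg0 n, mul_pow]
        ring
    _ = ENNReal.ofReal (g ^ n * ∏ j ∈ Finset.range n, (Xseq g j * Xseq g (j+1)))
          * (ENNReal.ofReal (g * Xseq g n) * ENNReal.ofReal (Xseq g (n+1))) := by
        congr 1
        rw [← Equiv.tsum_eq Equiv.pnatEquivNat.symm]
        simp only [Equiv.pnatEquivNat_symm_apply, Nat.succPNat_coe]
        rw [tsum_congr (fun j => pow_succ' (ENNReal.ofReal (g * Xseq g n)) j),
          ENNReal.tsum_mul_left, ENNReal.tsum_geometric, ofReal_X_succ hg0 hg1 n]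
    _ = ENNReal.ofReal (Wseq g (n+1)) := by
        rw [← ENNReal.ofReal_mul (mul_nonneg hg0.le (hXp n).le),
          ← ENNReal.ofReal_mul hc, Wseq_eq hg0 hg1 n, Finset.prod_range_succ]
        congr 1
        ring
end

section
/- Let α ∈ [0, 1] and let g be real with 0 < g < 1/(4(1+α)). Then for every n ≥ 1 and every w : ℕ → ℝ, the quadratic form inequality ∑_{r=1}^n ∑_{s=1}^n (r·s)^{−1/2}·(1/2)·r·C(r+s−1, r)·((1+α)^r + (1−α)^r)^{1/2}·((1+α)^s + (1−α)^s)^{1/2}·(√g)^{r+s}·w_r·w_s ≤ ∑_{s=1}^n w_s² holds. In operator terms: the largest eigenvalue λ₁^{di}(g, α) of the symmetrised dilute transfer operator D^{1/2} K^{di}(g,α) D^{1/2} satisfies λ₁^{di}(g, α) ≤ 1 for all g ∈ (0, 1/(4(1+α))). -/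
private lemma my_sqrt_pow (x : ℝ) (h : 0 ≤ x) (n : ℕ) :
    Real.sqrt (x^n) = Real.sqrt x ^ n := by
  induction n with
  | zero => simp
  | succ n ih => rw [pow_succ, Real.sqrt_mul (pow_nonneg h n), ih, pow_succ]

private lemma choose_swap (a b : ℕ) :
    (a+1) * (a+b+1).choose (a+1) = (b+1) * (a+b+1).choose (b+1) := by
  have h3 : (a+b).choose a = (a+b).choose b := by
    have := Nat.choose_symm (Nat.le_add_right a b)
    simpa using this.symm
  calc (a+1) * (a+b+1).choose (a+1) = (a+b+1).choose (a+1) * (a+1) := by ring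
    _ = Nat.succ (a+b) * (a+b).choose a := (Nat.add_one_mul_choose_eq (a+b) a).symm
    _ = Nat.succ (a+b) * (a+b).choose b := by rw [h3]
    _ = (a+b+1).choose (b+1) * (b+1) := Nat.add_one_mul_choose_eq (a+b) b
    _ = (b+1) * (a+b+1).choose (b+1) := by ring

private lemma term_bound (α g : ℝ) (hα0 : 0 ≤ α) (hα1 : α ≤ 1) (hg0 : 0 ≤ g)
    (r s : ℕ) (hr : 1 ≤ r) (hs : 1 ≤ s) :
    (Real.sqrt ((r : ℝ) * (s : ℝ)))⁻¹ * (1/2) * (r : ℝ)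
          * (Nat.choose (r + s - 1) r : ℝ)
          * Real.sqrt ((1 + α) ^ r + (1 - α) ^ r)
          * Real.sqrt ((1 + α) ^ s + (1 - α) ^ s)
          * Real.sqrt g ^ (r + s) * (Real.sqrt r / Real.sqrt s)
      ≤ (Nat.choose (r + s - 1) s : ℝ) * Real.sqrt ((1+α)*g) ^ (r+s) := by
  have hrR : (0:ℝ) < (r:ℝ) := by exact_mod_cast hr
  have hsR : (0:ℝ) < (s:ℝ) := by exact_mod_cast hs
  have hsr : Real.sqrt ((r:ℝ)*(s:ℝ)) = Real.sqrt r * Real.sqrt s :=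
    Real.sqrt_mul hrR.le _
  have hsqr : (0:ℝ) < Real.sqrt r := Real.sqrt_pos.mpr hrR
  have hsqs : (0:ℝ) < Real.sqrt s := Real.sqrt_pos.mpr hsR
  have hss : Real.sqrt s * Real.sqrt s = (s:ℝ) := Real.mul_self_sqrt hsR.le
  -- the Nat identity, cast
  have hnat : (r:ℝ) * (Nat.choose (r+s-1) r : ℝ) = (s:ℝ) * (Nat.choose (r+s-1) s : ℝ) := by
    obtain ⟨a, rfl⟩ : ∃ a, r = a+1 := ⟨r-1, by omega⟩
    obtain ⟨b, rfl⟩ : ∃ b, s = b+1 := ⟨s-1, by omega⟩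
    have e : (a+1)+(b+1)-1 = a+b+1 := by omega
    rw [e]
    exact_mod_cast choose_swap a b
  -- algebraic rewrite of LHS
  set A := Real.sqrt ((1 + α) ^ r + (1 - α) ^ r) with hA
  set B := Real.sqrt ((1 + α) ^ s + (1 - α) ^ s) with hB
  have key : (Real.sqrt ((r : ℝ) * (s : ℝ)))⁻¹ * (1/2) * (r : ℝ)
          * (Nat.choose (r + s - 1) r : ℝ) * A * B
          * Real.sqrt g ^ (r + s) * (Real.sqrt r / Real.sqrt s)
      = (Nat.choose (r + s - 1) s : ℝ) * ((1/2) * A * B * Real.sqrt g ^ (r+s)) := by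
    rw [hsr]
    field_simp
    linear_combination (A*B*Real.sqrt g^(r+s))*hnat
      - (A*B*Real.sqrt g^(r+s)*((r+s-1).choose s : ℝ))*hss
  rw [key]
  have hAle : A ≤ Real.sqrt 2 * Real.sqrt (1+α) ^ r := by
    rw [hA, ← my_sqrt_pow (1+α) (by linarith) r, ← Real.sqrt_mul (by norm_num)]
    apply Real.sqrt_le_sqrt
    nlinarith [pow_le_pow_left₀ (by linarith : (0:ℝ) ≤ 1-α) (by linarith : (1-α:ℝ) ≤ 1+α) r]
  have hBle : B ≤ Real.sqrt 2 * Real.sqrt (1+α) ^ s := by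
    rw [hB, ← my_sqrt_pow (1+α) (by linarith) s, ← Real.sqrt_mul (by norm_num)]
    apply Real.sqrt_le_sqrt
    nlinarith [pow_le_pow_left₀ (by linarith : (0:ℝ) ≤ 1-α) (by linarith : (1-α:ℝ) ≤ 1+α) s]
  have hAnn : 0 ≤ A := Real.sqrt_nonneg _
  have hBnn : 0 ≤ B := Real.sqrt_nonneg _
  have hGnn : (0:ℝ) ≤ Real.sqrt g ^ (r+s) := by positivity
  have h2 : Real.sqrt 2 * Real.sqrt 2 = 2 := Real.mul_self_sqrt (by norm_num)
  have hxsplit : Real.sqrt ((1+α)*g) ^ (r+s) = Real.sqrt (1+α) ^ (r+s) * Real.sqrt g ^ (r+s) := by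
    rw [Real.sqrt_mul (by linarith), mul_pow]
  have hmain : (1/2) * A * B * Real.sqrt g ^ (r+s) ≤ Real.sqrt ((1+α)*g) ^ (r+s) := by
    rw [hxsplit]
    calc (1/2) * A * B * Real.sqrt g ^ (r+s)
        ≤ (1/2) * (Real.sqrt 2 * Real.sqrt (1+α) ^ r) * (Real.sqrt 2 * Real.sqrt (1+α) ^ s)
            * Real.sqrt g ^ (r+s) := by
          apply mul_le_mul_of_nonneg_right _ hGnn
          apply mul_le_mul (by apply mul_le_mul_of_nonneg_left hAle; norm_num) hBle hBnn
          positivity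
      _ = Real.sqrt (1+α) ^ (r+s) * Real.sqrt g ^ (r+s) := by
          rw [pow_add]
          rw [show (1/2 : ℝ) * (Real.sqrt 2 * Real.sqrt (1+α) ^ r) * (Real.sqrt 2 * Real.sqrt (1+α) ^ s)
            = (Real.sqrt 2 * Real.sqrt 2) * (1/2) * (Real.sqrt (1+α) ^ r * Real.sqrt (1+α) ^ s) by ring,
            h2]
          ring
  exact mul_le_mul_of_nonneg_left hmain (by positivity)


private lemma key_id (x : ℝ) (t : ℕ) : ∀ n, (1-x) * ∑ s ∈ Finset.range n, ((t+1+s).choose s : ℝ) * x^s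
    = ∑ s ∈ Finset.range n, ((t+s).choose s : ℝ) * x^s
      - (((t+1+n).choose n : ℝ) - ((t+n).choose n : ℝ)) * x^n := by
  intro m
  induction m with
  | zero => simp
  | succ m ih =>
      rw [Finset.sum_range_succ, Finset.sum_range_succ, mul_add, ih]
      have hA : ((t+1+(m+1)).choose (m+1) : ℝ)
          = ((t+1+m).choose m : ℝ) + ((t+(m+1)).choose (m+1) : ℝ) := by
        have h1 : (t+1+(m+1)).choose (m+1) = (t+1+m).choose m + (t+1+m).choose (m+1) :=
          Nat.choose_succ_succ (t+1+m) m
        have h2 : (t+1+m).choose (m+1) = (t+(m+1)).choose (m+1) := by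
          rw [show t+1+m = t+(m+1) by ring]
        rw [h1, h2]; push_cast; ring
      linear_combination (x^(m+1)) * hA

private lemma negbinom (x : ℝ) (hx0 : 0 ≤ x) (hx1 : x < 1) (t : ℕ) : ∀ n : ℕ,
    ∑ s ∈ Finset.range n, ((t+s).choose s : ℝ) * x^s ≤ ((1-x)⁻¹)^(t+1) := by
  have h1 : (0:ℝ) < 1 - x := by linarith
  induction t with
  | zero =>
      intro n
      simp only [Nat.zero_add, Nat.choose_self, Nat.cast_one, one_mul]
      calc ∑ s ∈ Finset.range n, x^s = (1 - x^n)/(1-x) := by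
              rw [geom_sum_eq (ne_of_lt hx1)]
              rw [div_eq_div_iff (by linarith) (by linarith)]
              ring
        _ ≤ 1/(1-x) := by
              gcongr
              nlinarith [pow_nonneg hx0 n]
        _ = ((1-x)⁻¹)^(0+1) := by simp [one_div]
  | succ t ih =>
      intro n
      have hid := key_id x t n
      have hmono : ((t+n).choose n : ℝ) ≤ ((t+1+n).choose n : ℝ) := by
        exact_mod_cast Nat.choose_le_choose n (by omega : t+n ≤ t+1+n)
      have hx : (0:ℝ) ≤ x^n := pow_nonneg hx0 n
      have hle : (1-x) * ∑ s ∈ Finset.range n, ((t+1+s).choose s : ℝ) * x^s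
          ≤ ∑ s ∈ Finset.range n, ((t+s).choose s : ℝ) * x^s := by
        rw [hid]; nlinarith
      have h2 := ih n
      calc ∑ s ∈ Finset.range n, ((t+1+s).choose s : ℝ) * x^s
          = ((1-x) * ∑ s ∈ Finset.range n, ((t+1+s).choose s : ℝ) * x^s) / (1-x) := by
            field_simp
        _ ≤ (((1-x)⁻¹)^(t+1)) / (1-x) := by gcongr; exact hle.trans h2
        _ = ((1-x)⁻¹)^(t+1+1) := by rw [div_eq_mul_inv]; ring

private lemma row_bound (x : ℝ) (hx0 : 0 ≤ x) (hx : x < 1/2) (r n : ℕ) (hr : 1 ≤ r) :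
    ∑ s ∈ Finset.Icc 1 n, ((r+s-1).choose s : ℝ) * x^(r+s) ≤ 1 := by
  have h1 : (0:ℝ) < 1-x := by linarith
  have step1 : ∑ s ∈ Finset.Icc 1 n, ((r+s-1).choose s : ℝ) * x^(r+s)
      = x^r * ∑ s ∈ Finset.Icc 1 n, (((r-1)+s).choose s : ℝ) * x^s := by
    rw [Finset.mul_sum]
    apply Finset.sum_congr rfl
    intro s hs
    rw [show r+s-1 = (r-1)+s by omega, pow_add]
    ring
  rw [step1]
  have hsub : Finset.Icc 1 n ⊆ Finset.range (n+1) := by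
    intro s hs
    simp only [Finset.mem_Icc] at hs
    simp only [Finset.mem_range]
    omega
  have h2 : ∑ s ∈ Finset.Icc 1 n, (((r-1)+s).choose s : ℝ) * x^s
      ≤ ∑ s ∈ Finset.range (n+1), (((r-1)+s).choose s : ℝ) * x^s :=
    Finset.sum_le_sum_of_subset_of_nonneg hsub (fun i _ _ => by positivity)
  have h3 := negbinom x hx0 (by linarith) (r-1) (n+1)
  have hr1 : (r-1)+1 = r := by omega
  rw [hr1] at h3
  have h4 : x^r * ∑ s ∈ Finset.Icc 1 n, (((r-1)+s).choose s : ℝ) * x^s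
      ≤ x^r * ((1-x)⁻¹)^r := by
    apply mul_le_mul_of_nonneg_left (h2.trans h3) (by positivity)
  apply h4.trans
  rw [← mul_pow]
  apply pow_le_one₀ (by positivity)
  rw [← div_eq_mul_inv, div_le_one h1]
  linarith


private lemma cast_choose_swap (r s : ℕ) (hr : 1 ≤ r) (hs : 1 ≤ s) :
    (r:ℝ) * ((r+s-1).choose r : ℝ) = (s:ℝ) * ((r+s-1).choose s : ℝ) := by
  obtain ⟨a, rfl⟩ : ∃ a, r = a+1 := ⟨r-1, by omega⟩
  obtain ⟨b, rfl⟩ : ∃ b, s = b+1 := ⟨s-1, by omega⟩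
  rw [show (a+1)+(b+1)-1 = a+b+1 by omega]
  have h3 : (a+b).choose a = (a+b).choose b := by
    have := Nat.choose_symm (Nat.le_add_right a b)
    simpa using this.symm
  have key : (a+1) * (a+b+1).choose (a+1) = (b+1) * (a+b+1).choose (b+1) :=
    calc (a+1) * (a+b+1).choose (a+1) = (a+b+1).choose (a+1) * (a+1) := by ring
      _ = Nat.succ (a+b) * (a+b).choose a := (Nat.add_one_mul_choose_eq (a+b) a).symm
      _ = Nat.succ (a+b) * (a+b).choose b := by rw [h3]
      _ = (a+b+1).choose (b+1) * (b+1) := Nat.add_one_mul_choose_eq (a+b) b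
      _ = (b+1) * (a+b+1).choose (b+1) := by ring
  exact_mod_cast key

/-- For `α ∈ [0,1]` and `0 < g < 1/(4(1+α))`, the quadratic form of the
symmetrised dilute loop model transfer operator is bounded by the identity: for every `n ≥ 1`
and `w : ℕ → ℝ`,
`∑_{r,s=1}^n (rs)^{-1/2}·(1/2)·r·C(r+s-1,r)·√((1+α)^r+(1-α)^r)·√((1+α)^s+(1-α)^s)·(√g)^{r+s}·w_r·w_s
  ≤ ∑_{s=1}^n w_s²`, i.e. `λ₁^{di}(g,α) ≤ 1`. -/
theorem stmt_18 (α : ℝ) (hα0 : 0 ≤ α) (hα1 : α ≤ 1) (g : ℝ) (hg0 : 0 < g)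
    (hg1 : g < 1 / (4 * (1 + α))) (n : ℕ) (hn : 1 ≤ n) (w : ℕ → ℝ) :
    (∑ r ∈ Finset.Icc 1 n, ∑ s ∈ Finset.Icc 1 n,
        (Real.sqrt ((r : ℝ) * (s : ℝ)))⁻¹ * (1/2) * (r : ℝ)
          * (Nat.choose (r + s - 1) r : ℝ)
          * Real.sqrt ((1 + α) ^ r + (1 - α) ^ r)
          * Real.sqrt ((1 + α) ^ s + (1 - α) ^ s)
          * Real.sqrt g ^ (r + s) * w r * w s)
      ≤ ∑ s ∈ Finset.Icc 1 n, w s ^ 2 := by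
  have hα' : (0:ℝ) < 1 + α := by linarith
  set x := Real.sqrt ((1+α)*g) with hxdef
  have hx0 : 0 ≤ x := Real.sqrt_nonneg _
  have hx2 : x^2 = (1+α)*g := Real.sq_sqrt (by positivity)
  have hq : (1+α)*g < 1/4 := by
    rw [lt_div_iff₀ (by positivity)] at hg1
    nlinarith
  have hxlt : x < 1/2 := by nlinarith
  set F : ℕ → ℕ → ℝ := fun r s =>
    (Real.sqrt ((r : ℝ) * (s : ℝ)))⁻¹ * (1/2) * (r : ℝ)
          * (Nat.choose (r + s - 1) r : ℝ)
          * Real.sqrt ((1 + α) ^ r + (1 - α) ^ r)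
          * Real.sqrt ((1 + α) ^ s + (1 - α) ^ s)
          * Real.sqrt g ^ (r + s) with hF
  have hFnn : ∀ r s : ℕ, 0 ≤ F r s := by
    intro r s
    simp only [hF]
    positivity
  have hFsymm : ∀ r s : ℕ, 1 ≤ r → 1 ≤ s → F r s = F s r := by
    intro r s hr hs
    have hnat := cast_choose_swap r s hr hs
    simp only [hF]
    rw [show (s:ℝ)*(r:ℝ) = (r:ℝ)*(s:ℝ) from mul_comm _ _,
      show s+r-1 = r+s-1 by omega, show s+r = r+s by omega]
    linear_combination ((Real.sqrt ((r:ℝ)*(s:ℝ)))⁻¹ * (1/2)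
      * Real.sqrt ((1 + α) ^ r + (1 - α) ^ r) * Real.sqrt ((1 + α) ^ s + (1 - α) ^ s)
      * Real.sqrt g ^ (r+s)) * hnat
  -- per-term bound hypothesis (to be provided by term_bound lemma)
  have hterm : ∀ r s : ℕ, 1 ≤ r → 1 ≤ s →
      F r s * (Real.sqrt r / Real.sqrt s) ≤ ((r+s-1).choose s : ℝ) * x ^ (r+s) := by
    intro r s hr hs
    rw [hxdef]
    exact term_bound α g hα0 hα1 hg0.le r s hr hs
  set I := Finset.Icc 1 n with hI
  set P : ℕ → ℕ → ℝ := fun r s => F r s * (Real.sqrt r / Real.sqrt s) * |w r|^2 with hP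
  set Q : ℕ → ℕ → ℝ := fun r s => F r s * (Real.sqrt s / Real.sqrt r) * |w s|^2 with hQdef
  have memI : ∀ r : ℕ, r ∈ I → 1 ≤ r := by
    intro r hr
    exact (Finset.mem_Icc.mp hr).1
  calc (∑ r ∈ I, ∑ s ∈ I,
        (Real.sqrt ((r : ℝ) * (s : ℝ)))⁻¹ * (1/2) * (r : ℝ)
          * (Nat.choose (r + s - 1) r : ℝ)
          * Real.sqrt ((1 + α) ^ r + (1 - α) ^ r)
          * Real.sqrt ((1 + α) ^ s + (1 - α) ^ s)
          * Real.sqrt g ^ (r + s) * w r * w s)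
      = ∑ r ∈ I, ∑ s ∈ I, F r s * w r * w s := rfl
    _ ≤ ∑ r ∈ I, ∑ s ∈ I, F r s * |w r| * |w s| := by
        apply Finset.sum_le_sum
        intro r _
        apply Finset.sum_le_sum
        intro s _
        calc F r s * w r * w s = F r s * (w r * w s) := by ring
          _ ≤ F r s * (|w r| * |w s|) := by
              apply mul_le_mul_of_nonneg_left _ (hFnn r s)
              rw [← abs_mul]
              exact le_abs_self _
          _ = F r s * |w r| * |w s| := by ring
    _ ≤ ∑ r ∈ I, ∑ s ∈ I, (1/2) * (P r s + Q r s) := by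
        apply Finset.sum_le_sum
        intro r hr
        apply Finset.sum_le_sum
        intro s hs
        have hrp : (0:ℝ) < (r:ℝ) := by exact_mod_cast memI r hr
        have hsp : (0:ℝ) < (s:ℝ) := by exact_mod_cast memI s hs
        have ha : (0:ℝ) < Real.sqrt r := Real.sqrt_pos.mpr hrp
        have hb : (0:ℝ) < Real.sqrt s := Real.sqrt_pos.mpr hsp
        have hid : (Real.sqrt r/Real.sqrt s) * |w r|^2 + (Real.sqrt s/Real.sqrt r) * |w s|^2
            - 2*(|w r| * |w s|)
            = (Real.sqrt r*|w r| - Real.sqrt s*|w s|)^2/(Real.sqrt r*Real.sqrt s)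
              + 2*(|w r| * |w s|) - 2*(|w r| * |w s|) := by
          field_simp
          ring
        have h2 : 2*(|w r| * |w s|) ≤ (Real.sqrt r/Real.sqrt s) * |w r|^2
            + (Real.sqrt s/Real.sqrt r) * |w s|^2 := by
          have hnn : (0:ℝ) ≤ (Real.sqrt r*|w r| - Real.sqrt s*|w s|)^2/(Real.sqrt r*Real.sqrt s) :=
            div_nonneg (sq_nonneg _) (by positivity)
          linarith [hid]
        calc F r s * |w r| * |w s| = (F r s/2) * (2*(|w r| * |w s|)) := by ring
          _ ≤ (F r s/2) * ((Real.sqrt r/Real.sqrt s) * |w r|^2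
              + (Real.sqrt s/Real.sqrt r) * |w s|^2) := by
              apply mul_le_mul_of_nonneg_left h2
              have := hFnn r s
              linarith
          _ = (1/2) * (P r s + Q r s) := by simp only [hP, hQdef]; ring
    _ = ∑ r ∈ I, ∑ s ∈ I, P r s := by
        have hQeq : ∑ r ∈ I, ∑ s ∈ I, Q r s = ∑ r ∈ I, ∑ s ∈ I, P r s := by
          rw [Finset.sum_comm]
          apply Finset.sum_congr rfl
          intro r hr
          apply Finset.sum_congr rfl
          intro s hs
          simp only [hP, hQdef]
          rw [hFsymm s r (memI s hs) (memI r hr)]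
        calc ∑ r ∈ I, ∑ s ∈ I, (1/2) * (P r s + Q r s)
            = (1/2) * ((∑ r ∈ I, ∑ s ∈ I, P r s) + (∑ r ∈ I, ∑ s ∈ I, Q r s)) := by
              rw [mul_add, Finset.mul_sum, Finset.mul_sum, ← Finset.sum_add_distrib]
              apply Finset.sum_congr rfl
              intro r _
              rw [Finset.mul_sum, Finset.mul_sum, ← Finset.sum_add_distrib]
              apply Finset.sum_congr rfl
              intro s _
              ring
          _ = ∑ r ∈ I, ∑ s ∈ I, P r s := by rw [hQeq]; ring
    _ ≤ ∑ r ∈ I, w r ^ 2 := by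
        have hrow : ∀ r ∈ I, ∑ s ∈ I, F r s * (Real.sqrt r / Real.sqrt s) ≤ 1 := by
          intro r hr
          calc ∑ s ∈ I, F r s * (Real.sqrt r / Real.sqrt s)
              ≤ ∑ s ∈ I, ((r+s-1).choose s : ℝ) * x ^ (r+s) := by
                apply Finset.sum_le_sum
                intro s hs
                exact hterm r s (memI r hr) (memI s hs)
            _ ≤ 1 := row_bound x hx0 hxlt r n (memI r hr)
        calc ∑ r ∈ I, ∑ s ∈ I, P r s
            = ∑ r ∈ I, (∑ s ∈ I, F r s * (Real.sqrt r / Real.sqrt s)) * |w r|^2 := by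
              apply Finset.sum_congr rfl
              intro r _
              rw [Finset.sum_mul]
          _ ≤ ∑ r ∈ I, 1 * |w r|^2 := by
              apply Finset.sum_le_sum
              intro r hr
              exact mul_le_mul_of_nonneg_right (hrow r hr) (sq_nonneg _)
          _ = ∑ r ∈ I, w r ^ 2 := by
              apply Finset.sum_congr rfl
              intro r _
              rw [one_mul, sq_abs]
end
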